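/- arXiv:2211.03351 — 3 statements merged into one kernel-verified Lean document; each statement's English description precedes it below -/
import Mathlib

section
/- Let ω ∈ D̂. Then sup_{0≤r<1} (1-r)/ω̂(r) < ∞ if and only if sup_{0≤r<1} (1-r) Σ_{k=1}^∞ r^k / ((k+1) ω_k) < ∞, where ω_k = ∫_0^1 s^k ω(s) ds. -/
open MeasureTheory Set

namespace S16

lemma intIcc (ω : ℝ → ℝ) (hInt : IntegrableOn ω (Set.Ico (0:ℝ) 1)) :
    IntegrableOn ω (Set.Icc (0:ℝ) 1) := by
  have h : Set.Icc (0:ℝ) 1 = Set.Ico 0 1 ∪ {1} := by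
    ext x
    simp only [Set.mem_Icc, Set.mem_union, Set.mem_Ico, Set.mem_singleton_iff]
    constructor
    · rintro ⟨h0, h1⟩
      rcases lt_or_eq_of_le h1 with h | h
      · exact Or.inl ⟨h0, h⟩
      · exact Or.inr h
    · rintro (⟨h0, h1⟩ | rfl)
      · exact ⟨h0, h1.le⟩
      · norm_num
  rw [h]
  refine hInt.union ?_
  have : (volume : Measure ℝ).restrict {1} = 0 := by
    rw [Measure.restrict_eq_zero]
    exact measure_singleton 1
  rw [IntegrableOn, this]
  exact integrable_zero_measure

lemma intPow (ω : ℝ → ℝ) (hnn : ∀ r, 0 ≤ ω r)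
    (hInt : IntegrableOn ω (Set.Ico (0:ℝ) 1)) (n : ℕ) :
    IntegrableOn (fun s => s ^ n * ω s) (Set.Icc (0:ℝ) 1) := by
  have hI := intIcc ω hInt
  refine Integrable.mono hI ?_ ?_
  · exact ((continuous_pow n).aestronglyMeasurable).mul hI.aestronglyMeasurable
  · rw [ae_restrict_iff' measurableSet_Icc]
    refine Filter.Eventually.of_forall (fun s hs => ?_)
    rw [Real.norm_eq_abs, Real.norm_eq_abs, abs_mul, abs_of_nonneg (hnn s)]
    have h1 : |s ^ n| ≤ 1 := by
      rw [abs_pow]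
      exact pow_le_one₀ (abs_nonneg s) (abs_le.mpr ⟨by linarith [hs.1], hs.2⟩)
    calc |s ^ n| * ω s ≤ 1 * ω s := mul_le_mul_of_nonneg_right h1 (hnn s)
    _ = ω s := one_mul _

end S16

namespace S16

lemma intPowIoc (ω : ℝ → ℝ) (hnn : ∀ r, 0 ≤ ω r)
    (hInt : IntegrableOn ω (Set.Ico (0:ℝ) 1)) (n : ℕ) {a b : ℝ} (h0 : 0 ≤ a) (hb : b ≤ 1) :
    IntegrableOn (fun s => s ^ n * ω s) (Set.Ioc a b) :=
  (intPow ω hnn hInt n).mono_set (fun x hx => ⟨le_trans h0 hx.1.le, le_trans hx.2 hb⟩)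

lemma intIoc (ω : ℝ → ℝ) (hInt : IntegrableOn ω (Set.Ico (0:ℝ) 1))
    {a b : ℝ} (h0 : 0 ≤ a) (hb : b ≤ 1) :
    IntegrableOn ω (Set.Ioc a b) :=
  (intIcc ω hInt).mono_set (fun x hx => ⟨le_trans h0 hx.1.le, le_trans hx.2 hb⟩)

lemma pow_nonneg_ae (ω : ℝ → ℝ) (hnn : ∀ r, 0 ≤ ω r) (n : ℕ) {a b : ℝ} (h0 : 0 ≤ a) :
    0 ≤ᵐ[(volume : Measure ℝ).restrict (Set.Ioc a b)] (fun s => s ^ n * ω s) := by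
  filter_upwards [ae_restrict_mem measurableSet_Ioc] with s hs
  exact mul_nonneg (pow_nonneg (le_trans h0 hs.1.le) n) (hnn s)

/-- monotonicity in the set for  s^n ω -/
lemma powMonoSet (ω : ℝ → ℝ) (hnn : ∀ r, 0 ≤ ω r)
    (hInt : IntegrableOn ω (Set.Ico (0:ℝ) 1)) (n : ℕ) {a b : ℝ} (h0 : 0 ≤ a) (hab : a ≤ b) :
    ∫ s in Set.Ioc b 1, s ^ n * ω s ≤ ∫ s in Set.Ioc a 1, s ^ n * ω s := by
  refine setIntegral_mono_set (intPowIoc ω hnn hInt n h0 le_rfl)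
    (pow_nonneg_ae ω hnn n h0) ?_
  exact HasSubset.Subset.eventuallyLE (Set.Ioc_subset_Ioc_left hab)

lemma Wmono (ω : ℝ → ℝ) (hnn : ∀ r, 0 ≤ ω r)
    (hInt : IntegrableOn ω (Set.Ico (0:ℝ) 1)) {a b : ℝ} (h0 : 0 ≤ a) (hab : a ≤ b) :
    ∫ s in Set.Ioc b 1, ω s ≤ ∫ s in Set.Ioc a 1, ω s := by
  simpa using powMonoSet ω hnn hInt 0 h0 hab

lemma powUpper (ω : ℝ → ℝ) (hnn : ∀ r, 0 ≤ ω r)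
    (hInt : IntegrableOn ω (Set.Ico (0:ℝ) 1)) (n : ℕ) {a b : ℝ} (h0 : 0 ≤ a) (hab : a ≤ b)
    (hb : b ≤ 1) :
    ∫ s in Set.Ioc a b, s ^ n * ω s ≤ b ^ n * ∫ s in Set.Ioc a b, ω s := by
  rw [← MeasureTheory.integral_const_mul _ _]
  refine setIntegral_mono_on (intPowIoc ω hnn hInt n h0 hb)
    ((intIoc ω hInt h0 hb).const_mul _) measurableSet_Ioc (fun s hs => ?_)
  exact mul_le_mul_of_nonneg_right
    (pow_le_pow_left₀ (le_trans h0 hs.1.le) hs.2 n) (hnn s)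

lemma powLower (ω : ℝ → ℝ) (hnn : ∀ r, 0 ≤ ω r)
    (hInt : IntegrableOn ω (Set.Ico (0:ℝ) 1)) (n : ℕ) {a : ℝ} (h0 : 0 ≤ a) (ha : a ≤ 1) :
    a ^ n * ∫ s in Set.Ioc a 1, ω s ≤ ∫ s in Set.Ioc a 1, s ^ n * ω s := by
  rw [← MeasureTheory.integral_const_mul _ _]
  refine setIntegral_mono_on ((intIoc ω hInt h0 le_rfl).const_mul _)
    (intPowIoc ω hnn hInt n h0 le_rfl) measurableSet_Ioc (fun s hs => ?_)
  exact mul_le_mul_of_nonneg_right (pow_le_pow_left₀ h0 hs.1.le n) (hnn s)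

lemma powUpperOne (ω : ℝ → ℝ) (hnn : ∀ r, 0 ≤ ω r)
    (hInt : IntegrableOn ω (Set.Ico (0:ℝ) 1)) (n : ℕ) {a : ℝ} (h0 : 0 ≤ a) :
    ∫ s in Set.Ioc a 1, s ^ n * ω s ≤ ∫ s in Set.Ioc a 1, ω s := by
  refine setIntegral_mono_on (intPowIoc ω hnn hInt n h0 le_rfl)
    (intIoc ω hInt h0 le_rfl) measurableSet_Ioc (fun s hs => ?_)
  calc s ^ n * ω s ≤ 1 * ω s := by
        refine mul_le_mul_of_nonneg_right ?_ (hnn s)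
        exact pow_le_one₀ (le_trans h0 hs.1.le) hs.2
  _ = ω s := one_mul _

lemma splitInt (ω : ℝ → ℝ) (hnn : ∀ r, 0 ≤ ω r)
    (hInt : IntegrableOn ω (Set.Ico (0:ℝ) 1)) (n : ℕ) {a b : ℝ} (h0 : 0 ≤ a) (hab : a ≤ b)
    (hb : b ≤ 1) :
    ∫ s in Set.Ioc a 1, s ^ n * ω s
      = (∫ s in Set.Ioc a b, s ^ n * ω s) + ∫ s in Set.Ioc b 1, s ^ n * ω s := by
  rw [← Set.Ioc_union_Ioc_eq_Ioc hab hb]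
  exact setIntegral_union (Set.Ioc_disjoint_Ioc_of_le le_rfl) measurableSet_Ioc
    (intPowIoc ω hnn hInt n h0 hb) (intPowIoc ω hnn hInt n (le_trans h0 hab) le_rfl)

end S16

namespace S16

lemma pow_div_factorial_le_exp (x : ℝ) (hx : 0 ≤ x) (p : ℕ) :
    x ^ p / p.factorial ≤ Real.exp x := by
  calc x ^ p / p.factorial
      ≤ ∑ i ∈ Finset.range (p+1), x ^ i / i.factorial := by
        refine Finset.single_le_sum (f := fun i => x ^ i / (i.factorial : ℝ))
          (fun i _ => by positivity) (Finset.self_mem_range_succ p)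
  _ ≤ Real.exp x := Real.sum_le_exp_of_nonneg hx _

/-- numeric: C^i e^{-2^i/4} ≤ p! 4^p (1/2)^i when 2*C ≤ 2^p -/
lemma numeric_term (C : ℝ) (hC : 1 ≤ C) (p i : ℕ) (hp : 2 * C ≤ 2 ^ p) :
    C ^ i * Real.exp (-(2 ^ i : ℝ) / 4) ≤ (p.factorial : ℝ) * 4 ^ p * (1/2) ^ i := by
  have h2 : (0:ℝ) < 2 ^ i := by positivity
  have hfac : (0:ℝ) < (p.factorial : ℝ) := by positivity
  have hkey : ((2:ℝ) ^ i / 4) ^ p / p.factorial ≤ Real.exp ((2:ℝ) ^ i / 4) :=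
    pow_div_factorial_le_exp _ (by positivity) p
  have hy : (0:ℝ) < ((2:ℝ) ^ i / 4) ^ p / p.factorial := by positivity
  have hexp : Real.exp (-(2 ^ i : ℝ) / 4) ≤ (p.factorial : ℝ) * 4 ^ p / ((2:ℝ) ^ p) ^ i := by
    have e1 : (-(2 ^ i : ℝ)) / 4 = -((2:ℝ) ^ i / 4) := by ring
    rw [e1, Real.exp_neg]
    calc (Real.exp ((2:ℝ) ^ i / 4))⁻¹ ≤ (((2:ℝ) ^ i / 4) ^ p / p.factorial)⁻¹ :=
          inv_anti₀ hy hkey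
    _ = (p.factorial : ℝ) * 4 ^ p / ((2:ℝ) ^ p) ^ i := by
        rw [div_pow, ← pow_right_comm]
        field_simp
  calc C ^ i * Real.exp (-(2 ^ i : ℝ) / 4)
      ≤ C ^ i * ((p.factorial : ℝ) * 4 ^ p / ((2:ℝ) ^ p) ^ i) :=
        mul_le_mul_of_nonneg_left hexp (by positivity)
  _ = (p.factorial : ℝ) * 4 ^ p * (C / 2 ^ p) ^ i := by
      rw [div_pow]; ring
  _ ≤ (p.factorial : ℝ) * 4 ^ p * (1/2) ^ i := by
      refine mul_le_mul_of_nonneg_left (pow_le_pow_left₀ ?_ ?_ i) (by positivity)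
      · positivity
      · rw [div_le_div_iff₀ (by positivity) (by norm_num)]
        linarith

end S16

namespace S16

lemma DIter (What : ℝ → ℝ) (C : ℝ) (hC : 1 ≤ C)
    (hDC : ∀ r ∈ Set.Ico (0:ℝ) 1, What r ≤ C * What ((1 + r) / 2))
    {δ : ℝ} (hδ0 : 0 < δ) (hδ1 : δ ≤ 1) (k : ℕ) :
    What (1 - δ) ≤ C ^ k * What (1 - δ / 2 ^ k) := by
  induction k with
  | zero => simp
  | succ k ih =>
    have hmem : 1 - δ / 2 ^ k ∈ Set.Ico (0:ℝ) 1 := by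
      constructor
      · have : δ / 2 ^ k ≤ 1 := by
          apply div_le_one_of_le₀ (le_trans hδ1 (one_le_pow₀ (by norm_num))) (by positivity)
        linarith
      · have : 0 < δ / 2 ^ k := by positivity
        linarith
    have hstep := hDC _ hmem
    have harg : (1 + (1 - δ / 2 ^ k)) / 2 = 1 - δ / 2 ^ (k+1) := by
      rw [pow_succ]; ring
    rw [harg] at hstep
    calc What (1 - δ) ≤ C ^ k * What (1 - δ / 2 ^ k) := ih
    _ ≤ C ^ k * (C * What (1 - δ / 2 ^ (k+1))) := by
        refine mul_le_mul_of_nonneg_left hstep (by positivity)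
    _ = C ^ (k+1) * What (1 - δ / 2 ^ (k+1)) := by ring

end S16

namespace S16

lemma rj_nonneg (j : ℕ) : (0:ℝ) ≤ 1 - 1/2^j := by
  have : (1:ℝ)/2^j ≤ 1 := by
    apply div_le_one_of_le₀ (one_le_pow₀ (by norm_num)) (by positivity)
  linarith

lemma rj_le_one (j : ℕ) : (1:ℝ) - 1/2^j ≤ 1 := by
  have : (0:ℝ) < 1/2^j := by positivity
  linarith

lemma rj_mono (j : ℕ) : (1:ℝ) - 1/2^j ≤ 1 - 1/2^(j+1) := by
  have h : (1:ℝ)/2^(j+1) ≤ 1/2^j := by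
    apply div_le_div_of_nonneg_left (by norm_num) (by positivity)
    exact pow_le_pow_right₀ (by norm_num) (Nat.le_succ j)
  linarith

lemma WmonoSet (ω : ℝ → ℝ) (hnn : ∀ r, 0 ≤ ω r)
    (hInt : IntegrableOn ω (Set.Ico (0:ℝ) 1)) {a b : ℝ} (h0 : 0 ≤ a) (hb : b ≤ 1) :
    ∫ s in Set.Ioc a b, ω s ≤ ∫ s in Set.Ioc a 1, ω s := by
  refine setIntegral_mono_set (intIoc ω hInt h0 le_rfl) ?_ ?_
  · filter_upwards [ae_restrict_mem measurableSet_Ioc] with s _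
    exact hnn s
  · exact HasSubset.Subset.eventuallyLE (Set.Ioc_subset_Ioc_right hb)

lemma telescope (ω : ℝ → ℝ) (hnn : ∀ r, 0 ≤ ω r)
    (hInt : IntegrableOn ω (Set.Ico (0:ℝ) 1))
    (What : ℝ → ℝ) (hWhat : ∀ r, What r = ∫ s in Set.Ioc r 1, ω s) (n m : ℕ) :
    ∫ s in Set.Ioc (0:ℝ) 1, s ^ n * ω s
      ≤ (∑ j ∈ Finset.range m, ((1:ℝ) - 1/2^(j+1)) ^ n * What (1 - 1/2^j))
        + ∫ s in Set.Ioc ((1:ℝ) - 1/2^m) 1, s ^ n * ω s := by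
  induction m with
  | zero => norm_num
  | succ m ih =>
    refine le_trans ih ?_
    rw [Finset.sum_range_succ, add_assoc]
    gcongr ?_ + ?_
    · exact le_rfl
    have hsplit := splitInt ω hnn hInt n (rj_nonneg m) (rj_mono m) (rj_le_one (m+1))
    rw [hsplit]
    gcongr ?_ + ?_
    swap
    · exact le_rfl
    calc ∫ s in Set.Ioc ((1:ℝ) - 1/2^m) (1 - 1/2^(m+1)), s ^ n * ω s
        ≤ ((1:ℝ) - 1/2^(m+1)) ^ n * ∫ s in Set.Ioc ((1:ℝ) - 1/2^m) (1 - 1/2^(m+1)), ω s :=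
          powUpper ω hnn hInt n (rj_nonneg m) (rj_mono m) (rj_le_one (m+1))
    _ ≤ ((1:ℝ) - 1/2^(m+1)) ^ n * ∫ s in Set.Ioc ((1:ℝ) - 1/2^m) 1, ω s := by
          refine mul_le_mul_of_nonneg_left
            (WmonoSet ω hnn hInt (rj_nonneg m) (rj_le_one (m+1))) ?_
          exact pow_nonneg (rj_nonneg (m+1)) n
    _ = ((1:ℝ) - 1/2^(m+1)) ^ n * What (1 - 1/2^m) := by rw [hWhat]

end S16

namespace S16

lemma momUpper (ω : ℝ → ℝ) (hnn : ∀ r, 0 ≤ ω r)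
    (hInt : IntegrableOn ω (Set.Ico (0:ℝ) 1))
    (What : ℝ → ℝ) (hWhat : ∀ r, What r = ∫ s in Set.Ioc r 1, ω s)
    (C : ℝ) (hC : 1 ≤ C)
    (hDC : ∀ r ∈ Set.Ico (0:ℝ) 1, What r ≤ C * What ((1 + r) / 2))
    (p : ℕ) (hp : 2 * C ≤ 2 ^ p) (m n : ℕ) (hmn : (2:ℝ) ^ m ≤ 2 * n) :
    ∫ s in Set.Ioc (0:ℝ) 1, s ^ n * ω s
      ≤ ((p.factorial : ℝ) * 4 ^ p + 1) * What (1 - 1/2^m) := by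
  have hWnn : ∀ r, 0 ≤ What r := fun r => by
    rw [hWhat]; exact setIntegral_nonneg measurableSet_Ioc (fun x _ => hnn x)
  have hWm := hWnn (1 - 1/2^m)
  have hterm : ∀ j ∈ Finset.range m,
      ((1:ℝ) - 1/2^(j+1)) ^ n * What (1 - 1/2^j)
        ≤ ((p.factorial : ℝ) * 4 ^ p) * ((1/2) ^ (m-j) * What (1 - 1/2^m)) := by
    intro j hj
    have hjm : j < m := Finset.mem_range.mp hj
    -- D-hat iteration
    have hδ0 : (0:ℝ) < 1/2^j := by positivity
    have hδ1 : (1:ℝ)/2^j ≤ 1 := by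
      apply div_le_one_of_le₀ (one_le_pow₀ (by norm_num)) (by positivity)
    have hD1 : What (1 - 1/2^j) ≤ C ^ (m-j) * What (1 - 1/2^m) := by
      have := DIter What C hC hDC hδ0 hδ1 (m-j)
      have harg : (1:ℝ)/2^j / 2^(m-j) = 1/2^m := by
        rw [div_div, ← pow_add]
        congr 2
        omega
      rwa [harg] at this
    -- exponential bound
    have hE : ((1:ℝ) - 1/2^(j+1)) ^ n ≤ Real.exp (-(2 ^ (m-j) : ℝ) / 4) := by
      have h1 : (1:ℝ) - 1/2^(j+1) ≤ Real.exp (-(1/2^(j+1))) := by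
        have := Real.add_one_le_exp (-(1/2^(j+1) : ℝ))
        linarith
      calc ((1:ℝ) - 1/2^(j+1)) ^ n ≤ (Real.exp (-(1/2^(j+1)))) ^ n :=
            pow_le_pow_left₀ (rj_nonneg (j+1)) h1 n
      _ = Real.exp ((n : ℝ) * (-(1/2^(j+1)))) := by
            rw [← Real.exp_nat_mul]
      _ ≤ Real.exp (-(2 ^ (m-j) : ℝ) / 4) := by
            rw [Real.exp_le_exp]
            have e1 : (n:ℝ) * (-(1/2^(j+1))) = -((n:ℝ)/2^(j+1)) := by ring
            have e2 : (-(2 ^ (m-j) : ℝ)) / 4 = -((2 ^ (m-j) : ℝ)/4) := by ring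
            rw [e1, e2, neg_le_neg_iff,
              div_le_div_iff₀ (by positivity : (0:ℝ) < 4) (by positivity : (0:ℝ) < 2^(j+1)),
              ← pow_add]
            have e3 : m - j + (j+1) = m + 1 := by omega
            rw [e3, pow_succ]
            linarith
    calc ((1:ℝ) - 1/2^(j+1)) ^ n * What (1 - 1/2^j)
        ≤ Real.exp (-(2 ^ (m-j) : ℝ) / 4) * (C ^ (m-j) * What (1 - 1/2^m)) :=
          mul_le_mul hE hD1 (hWnn _) (Real.exp_nonneg _)
    _ = (C ^ (m-j) * Real.exp (-(2 ^ (m-j) : ℝ) / 4)) * What (1 - 1/2^m) := by ring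
    _ ≤ ((p.factorial : ℝ) * 4 ^ p * (1/2) ^ (m-j)) * What (1 - 1/2^m) :=
          mul_le_mul_of_nonneg_right (numeric_term C hC p (m-j) hp) hWm
    _ = ((p.factorial : ℝ) * 4 ^ p) * ((1/2) ^ (m-j) * What (1 - 1/2^m)) := by ring
  have hsum : ∑ j ∈ Finset.range m, (1/2:ℝ) ^ (m-j) ≤ 1 := by
    rw [← Finset.sum_range_reflect]
    have he : ∀ j ∈ Finset.range m, (1/2:ℝ) ^ (m - (m-1-j)) ≤ (1/2) ^ (j+1) := by
      intro j hj
      have hjm : j < m := Finset.mem_range.mp hj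
      have : m - (m-1-j) = j+1 := by omega
      rw [this]
    calc ∑ j ∈ Finset.range m, (1/2:ℝ) ^ (m - (m-1-j))
        ≤ ∑ j ∈ Finset.range m, (1/2:ℝ) ^ (j+1) := Finset.sum_le_sum he
    _ = (1/2) * ∑ j ∈ Finset.range m, (1/2:ℝ) ^ j := by
        rw [Finset.mul_sum]
        exact Finset.sum_congr rfl (fun j _ => by rw [pow_succ]; ring)
    _ ≤ (1/2) * 2 := by
        have := geom_sum_eq (by norm_num : (1/2:ℝ) ≠ 1) m
        have e : ((1/2:ℝ)^m - 1)/((1/2:ℝ) - 1) = 2 - 2*(1/2:ℝ)^m := by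
          field_simp
          ring
        rw [this, e]
        have h1 : (0:ℝ) ≤ (1/2:ℝ)^m := by positivity
        linarith
    _ = 1 := by norm_num
  calc ∫ s in Set.Ioc (0:ℝ) 1, s ^ n * ω s
      ≤ (∑ j ∈ Finset.range m, ((1:ℝ) - 1/2^(j+1)) ^ n * What (1 - 1/2^j))
        + ∫ s in Set.Ioc ((1:ℝ) - 1/2^m) 1, s ^ n * ω s :=
        telescope ω hnn hInt What hWhat n m
  _ ≤ (∑ j ∈ Finset.range m, ((p.factorial : ℝ) * 4 ^ p) * ((1/2) ^ (m-j) * What (1 - 1/2^m)))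
        + What (1 - 1/2^m) := by
        gcongr ?_ + ?_
        · exact Finset.sum_le_sum hterm
        · rw [hWhat]
          exact powUpperOne ω hnn hInt n (rj_nonneg m)
  _ ≤ ((p.factorial : ℝ) * 4 ^ p) * What (1 - 1/2^m) + What (1 - 1/2^m) := by
        gcongr ?_ + ?_
        swap
        · exact le_rfl
        rw [← Finset.mul_sum, ← Finset.sum_mul]
        calc ((p.factorial : ℝ) * 4 ^ p) * ((∑ j ∈ Finset.range m, (1/2:ℝ) ^ (m-j)) * What (1 - 1/2^m))
            ≤ ((p.factorial : ℝ) * 4 ^ p) * (1 * What (1 - 1/2^m)) := by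
              refine mul_le_mul_of_nonneg_left (mul_le_mul_of_nonneg_right hsum hWm) (by positivity)
        _ = ((p.factorial : ℝ) * 4 ^ p) * What (1 - 1/2^m) := by ring
  _ = ((p.factorial : ℝ) * 4 ^ p + 1) * What (1 - 1/2^m) := by ring

end S16

namespace S16

lemma momLower (ω : ℝ → ℝ) (hnn : ∀ r, 0 ≤ ω r)
    (hInt : IntegrableOn ω (Set.Ico (0:ℝ) 1))
    (What : ℝ → ℝ) (hWhat : ∀ r, What r = ∫ s in Set.Ioc r 1, ω s)
    (n : ℕ) {a : ℝ} (h0 : 0 ≤ a) (ha : a ≤ 1) :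
    a ^ n * What a ≤ ∫ s in Set.Ioc (0:ℝ) 1, s ^ n * ω s := by
  rw [hWhat]
  calc a ^ n * ∫ s in Set.Ioc a 1, ω s ≤ ∫ s in Set.Ioc a 1, s ^ n * ω s :=
        powLower ω hnn hInt n h0 ha
  _ ≤ ∫ s in Set.Ioc (0:ℝ) 1, s ^ n * ω s := powMonoSet ω hnn hInt n le_rfl h0

lemma momPos (ω : ℝ → ℝ) (hnn : ∀ r, 0 ≤ ω r)
    (hInt : IntegrableOn ω (Set.Ico (0:ℝ) 1))
    (What : ℝ → ℝ) (hWhat : ∀ r, What r = ∫ s in Set.Ioc r 1, ω s)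
    (hpos : ∀ r ∈ Set.Ico (0:ℝ) 1, 0 < What r) (n : ℕ) :
    0 < ∫ s in Set.Ioc (0:ℝ) 1, s ^ n * ω s := by
  have h := momLower ω hnn hInt What hWhat n (by norm_num : (0:ℝ) ≤ 1/2) (by norm_num)
  have := hpos (1/2) (by norm_num)
  nlinarith [pow_pos (by norm_num : (0:ℝ) < 1/2) n]

lemma momNat (ω : ℝ → ℝ) (mom : ℝ → ℝ)
    (hmom : ∀ x, mom x = ∫ s in Set.Ioc (0:ℝ) 1, s ^ x * ω s) (k : ℕ) :
    mom ((k : ℝ) + 1) = ∫ s in Set.Ioc (0:ℝ) 1, s ^ (k+1) * ω s := by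
  rw [hmom]
  congr 1
  funext s
  have : ((k : ℝ) + 1) = ((k + 1 : ℕ) : ℝ) := by push_cast; ring
  rw [this, Real.rpow_natCast]

set_option maxHeartbeats 1000000 in
lemma summable_terms (ω : ℝ → ℝ) (hnn : ∀ r, 0 ≤ ω r)
    (hInt : IntegrableOn ω (Set.Ico (0:ℝ) 1))
    (What : ℝ → ℝ) (hWhat : ∀ r, What r = ∫ s in Set.Ioc r 1, ω s)
    (hpos : ∀ r ∈ Set.Ico (0:ℝ) 1, 0 < What r) {r : ℝ} (h0 : 0 ≤ r) (h1 : r < 1) :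
    Summable (fun k : ℕ => r ^ (k+1) / (((k:ℝ) + 2) * ∫ s in Set.Ioc (0:ℝ) 1, s ^ (k+1) * ω s)) := by
  obtain ⟨ρ, hρ⟩ : ∃ ρ : ℝ, ρ = (1 + r) / 2 := ⟨_, rfl⟩
  have hρ0 : 0 < ρ := by rw [hρ]; linarith
  have hρ1 : ρ < 1 := by rw [hρ]; linarith
  have hrρ : r < ρ := by rw [hρ]; linarith
  have hWρ : 0 < What ρ := hpos ρ ⟨hρ0.le, hρ1⟩
  have hg : Summable (fun k : ℕ => (1 / What ρ) * (r/ρ) ^ (k+1)) := by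
    apply Summable.mul_left
    have hgeom : Summable (fun k : ℕ => (r/ρ) ^ k) := by
      apply summable_geometric_of_lt_one (by positivity)
      rw [div_lt_one hρ0]
      exact hrρ
    have h2 := hgeom.mul_left (r/ρ)
    refine h2.congr (fun k => ?_)
    rw [pow_succ]
    ring
  have hnn' : ∀ k : ℕ, 0 ≤ r ^ (k+1) / (((k:ℝ) + 2) * ∫ s in Set.Ioc (0:ℝ) 1, s ^ (k+1) * ω s) := by
    intro k
    have := momPos ω hnn hInt What hWhat hpos (k+1)
    positivity
  refine Summable.of_nonneg_of_le hnn' (fun k => ?_) hg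
  have hlow : ρ ^ (k+1) * What ρ ≤ ∫ s in Set.Ioc (0:ℝ) 1, s ^ (k+1) * ω s :=
    momLower ω hnn hInt What hWhat (k+1) hρ0.le hρ1.le
  have hmomp := momPos ω hnn hInt What hWhat hpos (k+1)
  have hk2 : (1:ℝ) ≤ (k:ℝ) + 2 := by
    have := Nat.cast_nonneg (α := ℝ) k
    linarith
  calc r ^ (k+1) / (((k:ℝ) + 2) * ∫ s in Set.Ioc (0:ℝ) 1, s ^ (k+1) * ω s)
      ≤ r ^ (k+1) / (1 * (ρ ^ (k+1) * What ρ)) := by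
        apply div_le_div_of_nonneg_left (pow_nonneg h0 _) (by positivity)
        calc (1:ℝ) * (ρ ^ (k+1) * What ρ) = ρ ^ (k+1) * What ρ := one_mul _
        _ ≤ (∫ s in Set.Ioc (0:ℝ) 1, s ^ (k+1) * ω s) := hlow
        _ ≤ ((k:ℝ) + 2) * ∫ s in Set.Ioc (0:ℝ) 1, s ^ (k+1) * ω s := by
            nlinarith
  _ = (1 / What ρ) * (r/ρ) ^ (k+1) := by
        have hρne : ρ ≠ 0 := hρ0.ne'
        have hWne : What ρ ≠ 0 := hWρ.ne'
        rw [one_mul, div_pow]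
        field_simp

end S16

namespace S16

lemma quarter_le (n : ℕ) (hn : 1 ≤ n) : (1/4 : ℝ) ≤ (1 - 1/((n:ℝ)+1)) ^ n := by
  have hn0 : (0:ℝ) < n := by exact_mod_cast hn
  have hb : (0:ℝ) < ((n:ℝ)+1)/n := by positivity
  have hup : (((n:ℝ)+1)/n) ^ n ≤ 4 := by
    have h1 : ((n:ℝ)+1)/n = 1 + 1/n := by field_simp
    have h2 : (1:ℝ) + 1/n ≤ Real.exp (1/n) := by
      have := Real.add_one_le_exp (1/(n:ℝ))
      linarith
    calc (((n:ℝ)+1)/n) ^ n ≤ (Real.exp (1/n)) ^ n := by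
          rw [h1]
          exact pow_le_pow_left₀ (by positivity) h2 n
    _ = Real.exp ((n:ℝ) * (1/n)) := by rw [← Real.exp_nat_mul]
    _ = Real.exp 1 := by rw [mul_one_div, div_self hn0.ne']
    _ ≤ 4 := by
        have := Real.exp_one_lt_d9
        linarith
  have hinv : (1 - 1/((n:ℝ)+1)) = ((n:ℝ)/(n+1)) := by field_simp; ring
  rw [hinv]
  have hprod : ((n:ℝ)/(n+1)) ^ n * (((n:ℝ)+1)/n) ^ n = 1 := by
    rw [← mul_pow, div_mul_div_comm]
    rw [show (n:ℝ) * ((n:ℝ)+1) = ((n:ℝ)+1) * n by ring]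
    rw [div_self (by positivity)]
    exact one_pow n
  have hbp : (0:ℝ) < (((n:ℝ)+1)/n) ^ n := pow_pos hb n
  nlinarith [pow_pos (by positivity : (0:ℝ) < (n:ℝ)/(n+1)) n]

lemma exp_neg_two_le (x : ℝ) (h0 : 0 ≤ x) (h1 : x ≤ 1/2) :
    Real.exp (-(2*x)) ≤ 1 - x := by
  have h2 : 1 + 2*x ≤ Real.exp (2*x) := by
    have := Real.add_one_le_exp (2*x)
    linarith
  have h3 : (0:ℝ) < 1 + 2*x := by linarith
  have h4 : (1:ℝ) ≤ (1 - x) * Real.exp (2*x) := by nlinarith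
  rw [Real.exp_neg]
  rw [inv_le_iff_one_le_mul₀ (by positivity)]
  nlinarith [h4]

end S16

open S16 in
/-- For ω ∈ D̂: sup_{0≤r<1} (1-r)/ω̂(r) < ∞ iff
sup_{0≤r<1} (1-r) Σ_{k≥1} r^k/((k+1) ω_k) < ∞. -/
theorem stmt_16 (ω : ℝ → ℝ) (hnn : ∀ r, 0 ≤ ω r)
    (hInt : IntegrableOn ω (Set.Ico (0:ℝ) 1))
    (What : ℝ → ℝ) (hWhat : ∀ r, What r = ∫ s in Set.Ioc r 1, ω s)
    (hpos : ∀ r ∈ Set.Ico (0:ℝ) 1, 0 < What r)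
    (hD : ∃ C ≥ (1:ℝ), ∀ r ∈ Set.Ico (0:ℝ) 1, What r ≤ C * What ((1 + r) / 2))
    (mom : ℝ → ℝ) (hmom : ∀ x, mom x = ∫ s in Set.Ioc (0:ℝ) 1, s ^ x * ω s) :
    (∃ M : ℝ, ∀ r ∈ Set.Ico (0:ℝ) 1, (1 - r) / What r ≤ M) ↔
    (∃ M : ℝ, ∀ r ∈ Set.Ico (0:ℝ) 1,
      (1 - r) * (∑' k : ℕ, r ^ (k + 1) / (((k : ℝ) + 2) * mom ((k : ℝ) + 1))) ≤ M) := by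
  obtain ⟨C, hC, hDC⟩ := hD
  have hrew : ∀ r : ℝ,
      (∑' k : ℕ, r ^ (k + 1) / (((k : ℝ) + 2) * mom ((k : ℝ) + 1)))
        = ∑' k : ℕ, r ^ (k + 1) / (((k : ℝ) + 2) * ∫ s in Set.Ioc (0:ℝ) 1, s ^ (k+1) * ω s) :=
    fun r => tsum_congr (fun k => by rw [momNat ω mom hmom k])
  constructor
  · rintro ⟨M, hM⟩
    have hM0 : 0 < M := by
      have h0 := hM 0 (by norm_num)
      have hW0 := hpos 0 (by norm_num)
      have : (0:ℝ) < (1 - 0) / What 0 := by positivity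
      linarith
    refine ⟨4 * M, ?_⟩
    rintro r ⟨hr0, hr1⟩
    rw [hrew]
    -- per-term bound
    have hterm : ∀ k : ℕ,
        r ^ (k + 1) / (((k : ℝ) + 2) * ∫ s in Set.Ioc (0:ℝ) 1, s ^ (k+1) * ω s)
          ≤ (4 * M * r) * r ^ k := by
      intro k
      set a : ℝ := 1 - 1/((k:ℝ)+2) with ha
      have hk2 : (0:ℝ) < (k:ℝ) + 2 := by positivity
      have ha0 : 0 ≤ a := by
        rw [ha]
        have : 1/((k:ℝ)+2) ≤ 1 := by
          rw [div_le_one hk2]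
          linarith [Nat.cast_nonneg (α := ℝ) k]
        linarith
      have ha1 : a < 1 := by
        rw [ha]
        have : 0 < 1/((k:ℝ)+2) := by positivity
        linarith
      have hWa := hpos a ⟨ha0, ha1⟩
      have hMa := hM a ⟨ha0, ha1⟩
      have hWlow : (1 - a) / M ≤ What a := by
        rw [div_le_iff₀ hM0]
        rw [div_le_iff₀ hWa] at hMa
        nlinarith
      have h1a : 1 - a = 1/((k:ℝ)+2) := by rw [ha]; ring
      -- a ^ (k+1) ≥ 1/4
      have hq : (1/4 : ℝ) ≤ a ^ (k+1) := by
        have := quarter_le (k+1) (Nat.le_add_left 1 k)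
        have hcast : ((k+1 : ℕ):ℝ) + 1 = (k:ℝ) + 2 := by push_cast; ring
        rw [hcast] at this
        rw [ha]
        exact this
      have hmlow : 1/(4 * M * ((k:ℝ)+2)) ≤ ∫ s in Set.Ioc (0:ℝ) 1, s ^ (k+1) * ω s := by
        have h := momLower ω hnn hInt What hWhat (k+1) ha0 ha1.le
        have h2 : (1/4) * ((1 - a)/M) ≤ a ^ (k+1) * What a := by
          apply mul_le_mul hq hWlow (by rw [h1a]; positivity) (by positivity)
        rw [h1a] at h2
        calc 1/(4 * M * ((k:ℝ)+2)) = (1/4) * (1/((k:ℝ)+2)/M) := by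
              field_simp
        _ ≤ a ^ (k+1) * What a := h2
        _ ≤ _ := h
      have hmp := momPos ω hnn hInt What hWhat hpos (k+1)
      calc r ^ (k + 1) / (((k : ℝ) + 2) * ∫ s in Set.Ioc (0:ℝ) 1, s ^ (k+1) * ω s)
          ≤ r ^ (k + 1) / (((k : ℝ) + 2) * (1/(4 * M * ((k:ℝ)+2)))) := by
            apply div_le_div_of_nonneg_left (pow_nonneg hr0 _) (by positivity)
            exact mul_le_mul_of_nonneg_left hmlow (by positivity)
      _ = (4 * M) * r ^ (k+1) := by
            field_simp
      _ = (4 * M * r) * r ^ k := by rw [pow_succ]; ring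
    have hsum := summable_terms ω hnn hInt What hWhat hpos hr0 hr1
    have hgeom : Summable (fun k : ℕ => (4 * M * r) * r ^ k) :=
      (summable_geometric_of_lt_one hr0 hr1).mul_left _
    have htsum : (∑' k : ℕ, r ^ (k + 1) / (((k : ℝ) + 2) * ∫ s in Set.Ioc (0:ℝ) 1, s ^ (k+1) * ω s))
        ≤ (4 * M * r) * (1 - r)⁻¹ := by
      calc _ ≤ ∑' k : ℕ, (4 * M * r) * r ^ k := Summable.tsum_le_tsum hterm hsum hgeom
      _ = (4 * M * r) * ∑' k : ℕ, r ^ k := tsum_mul_left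
      _ = (4 * M * r) * (1 - r)⁻¹ := by rw [tsum_geometric_of_lt_one hr0 hr1]
    have h1r : (0:ℝ) < 1 - r := by linarith
    calc (1 - r) * _ ≤ (1 - r) * ((4 * M * r) * (1 - r)⁻¹) := by
          exact mul_le_mul_of_nonneg_left htsum h1r.le
    _ = (4 * M * r) * ((1 - r) * (1 - r)⁻¹) := by ring
    _ = 4 * M * r := by rw [mul_inv_cancel₀ h1r.ne', mul_one]
    _ ≤ 4 * M := by nlinarith
  · rintro ⟨M, hM⟩
    obtain ⟨p, hp'⟩ := pow_unbounded_of_one_lt (2*C) (one_lt_two (α := ℝ))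
    have hp : 2 * C ≤ 2 ^ p := hp'.le
    set K : ℝ := (p.factorial : ℝ) * 4 ^ p + 1 with hKdef
    have hK0 : 0 < K := by positivity
    have hW34 : 0 < What (3/4 : ℝ) := hpos _ (by norm_num)
    refine ⟨max (1 / What (3/4)) (3 * K * Real.exp 8 * M), ?_⟩
    rintro r ⟨hr0, hr1⟩
    by_cases hcase : r < 3/4
    · refine le_trans ?_ (le_max_left _ _)
      have hWr : 0 < What r := hpos r ⟨hr0, hr1⟩
      have hmono : What (3/4 : ℝ) ≤ What r := by
        rw [hWhat, hWhat]
        exact Wmono ω hnn hInt hr0 hcase.le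
      rw [div_le_div_iff₀ hWr hW34]
      nlinarith
    · push_neg at hcase
      refine le_trans ?_ (le_max_right _ _)
      set δ : ℝ := 1 - r with hδdef
      have hδ0 : 0 < δ := by rw [hδdef]; linarith
      have hδ14 : δ ≤ 1/4 := by rw [hδdef]; linarith
      obtain hex : ∃ m : ℕ, (1/2:ℝ) ^ m < δ := exists_pow_lt_of_lt_one hδ0 (by norm_num)
      set m : ℕ := Nat.find hex with hmdef
      have hm1 : (1/2:ℝ) ^ m < δ := Nat.find_spec hex
      have hm2 : 2 < m := by
        have h22 : (1/2:ℝ) ^ m < (1/2:ℝ) ^ 2 := by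
          calc (1/2:ℝ) ^ m < δ := hm1
          _ ≤ 1/4 := hδ14
          _ = (1/2:ℝ)^2 := by norm_num
        exact (pow_lt_pow_iff_right_of_lt_one₀ (by norm_num) (by norm_num)).mp h22
      have hδle : δ ≤ (1/2:ℝ) ^ (m-1) :=
        not_lt.mp (Nat.find_min hex (by omega))
      set N : ℕ := 2 ^ m with hNdef
      have hNcast : (N:ℝ) = 2 ^ m := by rw [hNdef]; push_cast; ring
      have hN4 : 4 ≤ N := by
        rw [hNdef]
        calc 4 = 2 ^ 2 := by norm_num
        _ ≤ 2 ^ m := Nat.pow_le_pow_right (by norm_num) (by omega)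
      have hNR : (0:ℝ) < N := by rw [hNcast]; positivity
      have h1N : 1 / (N:ℝ) < δ := by
        rw [hNcast]
        calc 1 / (2:ℝ)^m = (1/2:ℝ)^m := by rw [div_pow]; norm_num
        _ < δ := hm1
      have hδN : δ ≤ 2 / (N:ℝ) := by
        have hsp : (1/2:ℝ) ^ (m-1) = 2 / (N:ℝ) := by
          have e1 : ((1/2:ℝ))^(m-1) * 2^(m-1) = 1 := by
            rw [← mul_pow]
            norm_num
          have e2 : (2:ℝ)^m = 2^(m-1) * 2 := by
            rw [← pow_succ]
            congr 1
            omega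
          rw [hNcast, e2, eq_div_iff (by positivity), ← mul_assoc, e1, one_mul]
        rw [← hsp]
        exact hδle
      have hrle : r ≤ 1 - 1/2^m := by
        have : (1:ℝ)/2^m < δ := by rw [← hNcast]; exact h1N
        rw [hδdef] at this
        linarith
      have hWr : 0 < What r := hpos r ⟨hr0, hr1⟩
      have hWm' : What (1 - 1/2^m) ≤ What r := by
        rw [hWhat, hWhat]
        exact Wmono ω hnn hInt hr0 hrle
      -- exp(-8) ≤ r ^ (2N)
      have hr2N : Real.exp (-8:ℝ) ≤ r ^ (2*N) := by
        have he1 : Real.exp (-(2*δ)) ≤ r := by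
          have := exp_neg_two_le δ hδ0.le (by linarith)
          rw [hδdef]
          rw [hδdef] at this
          linarith
        calc Real.exp (-8:ℝ) ≤ Real.exp ((2*N : ℝ) * (-(2*δ))) := by
              rw [Real.exp_le_exp]
              have hNδ : (N:ℝ) * δ ≤ 2 := by
                rw [le_div_iff₀ hNR] at hδN
                linarith
              nlinarith
        _ = (Real.exp (-(2*δ))) ^ (2*N) := by
              rw [← Real.exp_nat_mul]
              push_cast
              ring_nf
        _ ≤ r ^ (2*N) := pow_le_pow_left₀ (Real.exp_nonneg _) he1 _
      -- per-term lower bound on F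
      set F : Finset ℕ := Finset.Ico (N-1) (2*N) with hFdef
      have hcard : F.card = N + 1 := by
        rw [hFdef, Nat.card_Ico]
        omega
      have hterm : ∀ k ∈ F,
          Real.exp (-8:ℝ) / (3*(N:ℝ)*K*What r)
            ≤ r ^ (k + 1) / (((k : ℝ) + 2) * ∫ s in Set.Ioc (0:ℝ) 1, s ^ (k+1) * ω s) := by
        intro k hk
        rw [hFdef, Finset.mem_Ico] at hk
        have hkN : N ≤ k + 1 := by omega
        have hk2N : k + 1 ≤ 2*N := by omega
        have hmu : (∫ s in Set.Ioc (0:ℝ) 1, s ^ (k+1) * ω s) ≤ K * What (1 - 1/2^m) := by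
          refine momUpper ω hnn hInt What hWhat C hC hDC p hp m (k+1) ?_
          have h1 : (N:ℝ) ≤ ((k:ℝ)+1) := by exact_mod_cast hkN
          rw [← hNcast]
          push_cast
          linarith
        have hmomle : (∫ s in Set.Ioc (0:ℝ) 1, s ^ (k+1) * ω s) ≤ K * What r :=
          le_trans hmu (mul_le_mul_of_nonneg_left hWm' hK0.le)
        have hmp := momPos ω hnn hInt What hWhat hpos (k+1)
        have hk3N : ((k:ℝ) + 2) ≤ 3 * N := by
          have h1 : ((k:ℝ)+1) ≤ 2*(N:ℝ) := by exact_mod_cast hk2N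
          have h2 : (4:ℝ) ≤ (N:ℝ) := by exact_mod_cast hN4
          linarith
        have hrk : Real.exp (-8:ℝ) ≤ r ^ (k+1) := by
          calc Real.exp (-8:ℝ) ≤ r ^ (2*N) := hr2N
          _ ≤ r ^ (k+1) := pow_le_pow_of_le_one hr0 hr1.le hk2N
        refine div_le_div₀ (pow_nonneg hr0 _) hrk (by positivity) ?_
        calc ((k:ℝ) + 2) * ∫ s in Set.Ioc (0:ℝ) 1, s ^ (k+1) * ω s
            ≤ (3*(N:ℝ)) * (K * What r) := by
              apply mul_le_mul hk3N hmomle hmp.le (by positivity)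
        _ = 3*(N:ℝ)*K*What r := by ring
      have hsumm := summable_terms ω hnn hInt What hWhat hpos hr0 hr1
      have hpartial : ((N:ℝ) + 1) * (Real.exp (-8:ℝ) / (3*(N:ℝ)*K*What r))
          ≤ ∑ k ∈ F, r ^ (k + 1) / (((k : ℝ) + 2) * ∫ s in Set.Ioc (0:ℝ) 1, s ^ (k+1) * ω s) := by
        have h := Finset.card_nsmul_le_sum F _ _ hterm
        rw [hcard] at h
        have : ((N+1 : ℕ) : ℝ) = (N:ℝ)+1 := by push_cast; ring
        rw [nsmul_eq_mul, this] at h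
        exact h
      have hts : (∑ k ∈ F, r ^ (k + 1) / (((k : ℝ) + 2) * ∫ s in Set.Ioc (0:ℝ) 1, s ^ (k+1) * ω s))
          ≤ ∑' k : ℕ, r ^ (k + 1) / (((k : ℝ) + 2) * ∫ s in Set.Ioc (0:ℝ) 1, s ^ (k+1) * ω s) := by
        refine Summable.sum_le_tsum F (fun k _ => ?_) hsumm
        have := momPos ω hnn hInt What hWhat hpos (k+1)
        positivity
      have hMr := hM r ⟨hr0, hr1⟩
      rw [hrew] at hMr
      have hchain : δ * (Real.exp (-8:ℝ) / (3*K*What r)) ≤ M := by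
        have hid : Real.exp (-8:ℝ) / (3*K*What r)
            = (N:ℝ) * (Real.exp (-8:ℝ) / (3*(N:ℝ)*K*What r)) := by
          field_simp
        calc δ * (Real.exp (-8:ℝ) / (3*K*What r))
            ≤ δ * (((N:ℝ)+1) * (Real.exp (-8:ℝ) / (3*(N:ℝ)*K*What r))) := by
              rw [hid]
              refine mul_le_mul_of_nonneg_left ?_ hδ0.le
              refine mul_le_mul_of_nonneg_right (by linarith) (by positivity)
        _ ≤ δ * ∑ k ∈ F, r ^ (k + 1) / (((k : ℝ) + 2) * ∫ s in Set.Ioc (0:ℝ) 1, s ^ (k+1) * ω s) :=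
              mul_le_mul_of_nonneg_left hpartial hδ0.le
        _ ≤ δ * ∑' k : ℕ, r ^ (k + 1) / (((k : ℝ) + 2) * ∫ s in Set.Ioc (0:ℝ) 1, s ^ (k+1) * ω s) :=
              mul_le_mul_of_nonneg_left hts hδ0.le
        _ ≤ M := by rw [hδdef]; exact hMr
      -- conclude
      have hee : Real.exp (-8:ℝ) * Real.exp 8 = 1 := by
        rw [← Real.exp_add]
        norm_num
      rw [div_le_iff₀ hWr]
      have hexp8 : (0:ℝ) < Real.exp 8 := Real.exp_pos _
      have hexpm8 : (0:ℝ) < Real.exp (-8:ℝ) := Real.exp_pos _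
      have h2 : δ * Real.exp (-8:ℝ) ≤ M * (3*K*What r) := by
        have he : δ * (Real.exp (-8:ℝ) / (3*K*What r)) = δ * Real.exp (-8:ℝ) / (3*K*What r) := by
          ring
        rw [he, div_le_iff₀ (by positivity)] at hchain
        linarith
      have h3 : δ * (Real.exp (-8:ℝ) * Real.exp 8) ≤ M * (3*K*What r) * Real.exp 8 := by
        rw [← mul_assoc]
        exact mul_le_mul_of_nonneg_right h2 hexp8.le
      rw [hee, mul_one] at h3
      calc 1 - r = δ := by rw [hδdef]
      _ ≤ M * (3*K*What r) * Real.exp 8 := h3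
      _ = 3 * K * Real.exp 8 * M * What r := by ring
end

section
/- Let ω be a radial weight in D̂. Then ω ω̂ ∈ D̂ and the moments satisfy (ω_x)² ≍ (ωω̂)_x for all x ≥ 1, where (ωω̂)_x = ∫_0^1 s^x ω(s) ω̂(s) ds. -/
open MeasureTheory Set

lemma aux_swap (f g : ℝ → ℝ) (r : ℝ)
    (hf : IntegrableOn f (Ioc r 1)) (hg : IntegrableOn g (Ioc r 1)) :
    ∫ s in Ioc r 1, f s * ∫ u in Ioc s 1, g u =
      ∫ u in Ioc r 1, (∫ s in Ioc r u, f s) * g u := by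
  set μ := (volume : Measure ℝ).restrict (Ioc r 1) with hμ
  set Φ : ℝ → ℝ → ℝ := fun s u => if s < u then f s * g u else 0 with hΦ
  have hmeas : MeasurableSet {p : ℝ × ℝ | p.1 < p.2} :=
    (isOpen_lt continuous_fst continuous_snd).measurableSet
  have hint : Integrable (Function.uncurry Φ) (μ.prod μ) := by
    have h1 : Integrable (fun p : ℝ × ℝ => f p.1 * g p.2) (μ.prod μ) := hf.mul_prod hg
    have : Function.uncurry Φ =
        {p : ℝ × ℝ | p.1 < p.2}.indicator (fun p : ℝ × ℝ => f p.1 * g p.2) := by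
      ext p
      by_cases h : p.1 < p.2 <;>
        simp [Function.uncurry, hΦ, h, Set.indicator_apply, Set.mem_setOf_eq]
    rw [this]
    exact h1.indicator hmeas
  have hswap := MeasureTheory.integral_integral_swap hint
  have hL : ∫ s, ∫ u, Φ s u ∂μ ∂μ = ∫ s in Ioc r 1, f s * ∫ u in Ioc s 1, g u := by
    apply setIntegral_congr_fun measurableSet_Ioc
    intro s hs
    show ∫ u, Φ s u ∂μ = f s * ∫ u in Ioc s 1, g u
    have : ∫ u, Φ s u ∂μ = ∫ u in Ioc r 1 ∩ Ioi s, f s * g u := by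
      rw [← setIntegral_indicator measurableSet_Ioi]
      apply setIntegral_congr_fun measurableSet_Ioc
      intro u _
      by_cases h : s < u <;> simp [hΦ, Set.indicator_apply, h, Set.mem_Ioi]
    rw [this, Set.Ioc_inter_Ioi, sup_eq_right.mpr (le_of_lt hs.1), integral_const_mul]
  have hR : ∫ u, ∫ s, Φ s u ∂μ ∂μ = ∫ u in Ioc r 1, (∫ s in Ioc r u, f s) * g u := by
    apply setIntegral_congr_fun measurableSet_Ioc
    intro u hu
    show ∫ s, Φ s u ∂μ = (∫ s in Ioc r u, f s) * g u
    have h1 : ∫ s, Φ s u ∂μ = ∫ s in Ioc r 1 ∩ Iio u, f s * g u := by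
      rw [← setIntegral_indicator measurableSet_Iio]
      apply setIntegral_congr_fun measurableSet_Ioc
      intro s _
      by_cases h : s < u <;> simp [hΦ, Set.indicator_apply, h, Set.mem_Iio]
    have h2 : Ioc r 1 ∩ Iio u = Ioo r u := by
      ext t
      simp only [Set.mem_inter_iff, Set.mem_Ioc, Set.mem_Iio, Set.mem_Ioo]
      constructor
      · rintro ⟨⟨h3, _⟩, h5⟩; exact ⟨h3, h5⟩
      · rintro ⟨h3, h4⟩; exact ⟨⟨h3, le_trans (le_of_lt h4) hu.2⟩, h4⟩
    rw [h1, h2, integral_mul_const, ← integral_Ioc_eq_integral_Ioo]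
  rw [← hL, ← hR]
  exact hswap

lemma aux_quarter (u : ℝ) (h0 : 0 ≤ u) (h12 : u ≤ 1/2) : (4:ℝ) ^ (-u) ≤ 1 - u := by
  have h := convexOn_exp.2 (Set.mem_univ (0:ℝ)) (Set.mem_univ (-Real.log 2))
    (by linarith : (0:ℝ) ≤ 1-2*u) (by linarith : (0:ℝ) ≤ 2*u) (by ring)
  simp only [smul_eq_mul, mul_zero, zero_add, Real.exp_zero] at h
  rw [Real.exp_neg, Real.exp_log two_pos] at h
  have h4 : (4:ℝ)^(-u) = Real.exp ((2*u) * (-Real.log 2)) := by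
    rw [Real.rpow_def_of_pos (by norm_num : (0:ℝ) < 4)]
    congr 1
    have hl : Real.log 4 = 2 * Real.log 2 := by
      rw [show (4:ℝ) = 2^(2:ℕ) by norm_num, Real.log_pow]; push_cast; ring
    rw [hl]; ring
  rw [h4]
  calc Real.exp (2*u * -Real.log 2) ≤ (1-2*u)*1 + 2*u*2⁻¹ := h
    _ = 1 - u := by ring

set_option maxHeartbeats 1000000 in
/-- For ω ∈ D̂: the weight ωω̂ is also in D̂, and (ω_x)² ≍ (ωω̂)_x for x ≥ 1. -/
theorem stmt_17 (ω : ℝ → ℝ) (hnn : ∀ r, 0 ≤ ω r)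
    (hInt : IntegrableOn ω (Set.Ico (0:ℝ) 1))
    (What : ℝ → ℝ) (hWhat : ∀ r, What r = ∫ s in Set.Ioc r 1, ω s)
    (hpos : ∀ r ∈ Set.Ico (0:ℝ) 1, 0 < What r)
    (hD : ∃ C ≥ (1:ℝ), ∀ r ∈ Set.Ico (0:ℝ) 1, What r ≤ C * What ((1 + r) / 2))
    (mom : ℝ → ℝ) (hmom : ∀ x, mom x = ∫ s in Set.Ioc (0:ℝ) 1, s ^ x * ω s)
    (momWW : ℝ → ℝ)
    (hmomWW : ∀ x, momWW x = ∫ s in Set.Ioc (0:ℝ) 1, s ^ x * (ω s * What s)) :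
    (∃ C ≥ (1:ℝ), ∀ r ∈ Set.Ico (0:ℝ) 1,
      (∫ s in Set.Ioc r 1, ω s * What s) ≤
        C * ∫ s in Set.Ioc ((1 + r) / 2) 1, ω s * What s) ∧
    (∃ c > (0:ℝ), ∃ C > (0:ℝ), ∀ x ≥ (1:ℝ),
      c * (mom x) ^ 2 ≤ momWW x ∧ momWW x ≤ C * (mom x) ^ 2) := by
  obtain ⟨C, hC1, hDD⟩ := hD
  have hC0 : (0:ℝ) < C := lt_of_lt_of_le one_pos hC1
  -- basic integrability
  have hae1 : Ioc (0:ℝ) 1 =ᵐ[volume] Ico (0:ℝ) 1 := Ioo_ae_eq_Ioc.symm.trans Ioo_ae_eq_Ico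
  have hω1 : IntegrableOn ω (Ioc 0 1) := by
    rw [IntegrableOn, Measure.restrict_congr_set hae1]; exact hInt
  have hωm : ∀ a b : ℝ, 0 ≤ a → b ≤ 1 → IntegrableOn ω (Ioc a b) := fun a b ha hb =>
    hω1.mono_set (fun x hx => ⟨lt_of_le_of_lt ha hx.1, hx.2.trans hb⟩)
  have hrint : ∀ p : ℝ, 0 ≤ p → ∀ a b : ℝ, 0 ≤ a → b ≤ 1 →
      IntegrableOn (fun s => s ^ p * ω s) (Ioc a b) := by
    intro p hp a b ha hb
    have h1 : Measurable fun s : ℝ => s ^ p := by fun_prop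
    apply Integrable.mono' (hωm a b ha hb)
      (h1.aestronglyMeasurable.mul (hωm a b ha hb).aestronglyMeasurable)
    rw [ae_restrict_iff' measurableSet_Ioc]
    filter_upwards with s hs
    have h0 : 0 < s := lt_of_le_of_lt ha hs.1
    have h2 : s ^ p ≤ 1 := Real.rpow_le_one h0.le (hs.2.trans hb) hp
    simp only [Pi.mul_apply]
    rw [Real.norm_eq_abs, abs_of_nonneg (mul_nonneg (Real.rpow_nonneg h0.le p) (hnn s))]
    nlinarith [hnn s, Real.rpow_nonneg h0.le p]
  -- basic facts about What
  have hWnn : ∀ r : ℝ, 0 ≤ What r := fun r => by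
    rw [hWhat]; exact setIntegral_nonneg measurableSet_Ioc fun x _ => hnn x
  have hWanti : ∀ a b : ℝ, 0 ≤ a → a ≤ b → What b ≤ What a := by
    intro a b ha hab
    rw [hWhat, hWhat]
    exact setIntegral_mono_set (hωm a 1 ha le_rfl) (Filter.Eventually.of_forall hnn)
      (HasSubset.Subset.eventuallyLE (Ioc_subset_Ioc_left hab))
  have hWsplit : ∀ a b : ℝ, 0 ≤ a → a ≤ b → b ≤ 1 →
      What a = (∫ s in Ioc a b, ω s) + What b := by
    intro a b ha hab hb
    rw [hWhat, hWhat, ← setIntegral_union (Set.Ioc_disjoint_Ioc_of_le le_rfl) measurableSet_Ioc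
      (hωm a b ha hb) (hωm b 1 (ha.trans hab) le_rfl), Set.Ioc_union_Ioc_eq_Ioc hab hb]
  have hω2 : IntegrableOn ω (Icc 0 1) := by
    rw [IntegrableOn, Measure.restrict_congr_set (Ioc_ae_eq_Icc (α := ℝ)).symm]; exact hω1
  have hWcont : ContinuousOn What (Icc 0 1) := by
    have hprim : ContinuousOn (fun x => ∫ t in Ioc 0 x, ω t) (Icc 0 1) :=
      intervalIntegral.continuousOn_primitive hω2
    refine ContinuousOn.congr (f := fun x => What 0 - ∫ t in Ioc 0 x, ω t)
      (continuousOn_const.sub hprim) ?_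
    intro s hs
    have := hWsplit 0 s le_rfl hs.1 hs.2
    simp only
    linarith
  have hWaesm : ∀ a : ℝ, 0 ≤ a →
      AEStronglyMeasurable What (volume.restrict (Ioc a 1)) := fun a ha =>
    (hWcont.aestronglyMeasurable measurableSet_Icc).mono_measure
      (Measure.restrict_mono (show Ioc a 1 ⊆ Icc 0 1 from fun x hx => ⟨ha.trans hx.1.le, hx.2⟩) le_rfl)
  have hWWint0 : ∀ a : ℝ, 0 ≤ a → IntegrableOn (fun s => ω s * What s) (Ioc a 1) := by
    intro a ha
    apply Integrable.mono' ((hωm a 1 ha le_rfl).const_mul (What 0))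
      ((hωm a 1 ha le_rfl).aestronglyMeasurable.mul (hWaesm a ha))
    rw [ae_restrict_iff' measurableSet_Ioc]
    filter_upwards with s hs
    have h0 : (0:ℝ) ≤ s := ha.trans hs.1.le
    simp only [Pi.mul_apply]
    rw [Real.norm_eq_abs, abs_of_nonneg (mul_nonneg (hnn s) (hWnn s))]
    have := hWanti 0 s le_rfl h0
    nlinarith [hnn s, hWnn s]
  have hWWint : ∀ p : ℝ, 0 ≤ p → IntegrableOn (fun s => s ^ p * (ω s * What s)) (Ioc 0 1) := by
    intro p hp
    have h1 : Measurable fun s : ℝ => s ^ p := by fun_prop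
    apply Integrable.mono' ((hωm 0 1 le_rfl le_rfl).const_mul (What 0))
      (h1.aestronglyMeasurable.mul ((hωm 0 1 le_rfl le_rfl).aestronglyMeasurable.mul
        (hWaesm 0 le_rfl)))
    rw [ae_restrict_iff' measurableSet_Ioc]
    filter_upwards with s hs
    have h0 : 0 < s := hs.1
    have h2 : s ^ p ≤ 1 := Real.rpow_le_one h0.le hs.2 hp
    simp only [Pi.mul_apply]
    rw [Real.norm_eq_abs, abs_of_nonneg (mul_nonneg (Real.rpow_nonneg h0.le p)
      (mul_nonneg (hnn s) (hWnn s)))]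
    have h3 := hWanti 0 s le_rfl h0.le
    nlinarith [mul_nonneg (hnn s) (hWnn s),
      mul_le_mul_of_nonneg_right h2 (mul_nonneg (hnn s) (hWnn s)),
      mul_le_mul_of_nonneg_left h3 (hnn s)]
  -- the key identity : tail of ωω̂ is ω̂²/2
  have hIdent : ∀ r : ℝ, 0 ≤ r → r ≤ 1 →
      (∫ s in Ioc r 1, ω s * What s) = What r ^ 2 / 2 := by
    intro r hr hr1
    have h := aux_swap ω ω r (hωm r 1 hr le_rfl) (hωm r 1 hr le_rfl)
    have hL : (∫ s in Ioc r 1, ω s * What s) = ∫ s in Ioc r 1, ω s * ∫ u in Ioc s 1, ω u := by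
      simp only [hWhat]
    have hR : (∫ u in Ioc r 1, (∫ s in Ioc r u, ω s) * ω u)
        = ∫ u in Ioc r 1, (What r - What u) * ω u := by
      apply setIntegral_congr_fun measurableSet_Ioc
      intro u hu
      have h2 := hWsplit r u hr hu.1.le hu.2
      have h3 : (∫ s in Ioc r u, ω s) = What r - What u := by linarith
      show (∫ s in Ioc r u, ω s) * ω u = (What r - What u) * ω u
      rw [h3]
    have h1 : IntegrableOn (fun u => What r * ω u) (Ioc r 1) :=
      (hωm r 1 hr le_rfl).const_mul _
    have h2 : IntegrableOn (fun u => What u * ω u) (Ioc r 1) := by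
      have := hWWint0 r hr
      apply this.congr_fun (fun u hu => mul_comm (ω u) (What u)) measurableSet_Ioc
    have hsub : ∫ u in Ioc r 1, (What r - What u) * ω u
        = What r * What r - ∫ u in Ioc r 1, ω u * What u := by
      calc ∫ u in Ioc r 1, (What r - What u) * ω u
          = ∫ u in Ioc r 1, (What r * ω u - What u * ω u) := by
            apply setIntegral_congr_fun measurableSet_Ioc; intro u _; ring
        _ = (∫ u in Ioc r 1, What r * ω u) - ∫ u in Ioc r 1, What u * ω u :=
            integral_sub h1 h2
        _ = What r * What r - ∫ u in Ioc r 1, ω u * What u := by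
            rw [integral_const_mul, ← hWhat]
            congr 1
            apply setIntegral_congr_fun measurableSet_Ioc; intro u _; exact mul_comm _ _
    have hfin := hL.trans (h.trans (hR.trans hsub))
    rw [pow_two]
    linarith [hfin]
  constructor
  · -- Part A
    refine ⟨C^2, by nlinarith, fun r hr => ?_⟩
    have hmid : (0:ℝ) ≤ (1+r)/2 ∧ (1+r)/2 ≤ 1 := ⟨by linarith [hr.1], by linarith [hr.2]⟩
    rw [hIdent r hr.1 hr.2.le, hIdent ((1+r)/2) hmid.1 hmid.2]
    have hWr := hDD r hr
    have h0 := hWnn ((1+r)/2)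
    have h1 := hWnn r
    nlinarith [mul_le_mul hWr hWr h1 (by nlinarith : (0:ℝ) ≤ C * What ((1+r)/2))]
  · -- Part B
    have hSummable : Summable (fun n : ℕ => C ^ (n+1) * Real.exp (-(2:ℝ)^n)) := by
      apply summable_of_ratio_norm_eventually_le (r := 1/2) (by norm_num)
      have hev : ∀ᶠ n : ℕ in Filter.atTop, C * Real.exp (-(2:ℝ)^n) ≤ 1/2 := by
        rw [Filter.eventually_atTop]
        refine ⟨⌈Real.log (2*C)⌉₊, fun n hn => ?_⟩
        have h2n : Real.log (2*C) ≤ (2:ℝ)^n := by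
          have c1 : Real.log (2*C) ≤ (⌈Real.log (2*C)⌉₊ : ℝ) := Nat.le_ceil _
          have c2 : ((⌈Real.log (2*C)⌉₊ : ℕ) : ℝ) ≤ (n : ℝ) := by exact_mod_cast hn
          have c3 : (n : ℝ) ≤ (2:ℝ)^n := by exact_mod_cast (Nat.lt_two_pow_self (n := n)).le
          linarith
        have e1 : Real.exp (-(2:ℝ)^n) ≤ Real.exp (-Real.log (2*C)) :=
          Real.exp_le_exp.2 (by linarith)
        have e2 : Real.exp (-Real.log (2*C)) = 1/(2*C) := by
          rw [Real.exp_neg, Real.exp_log (by linarith), one_div]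
        calc C * Real.exp (-(2:ℝ)^n) ≤ C * (1/(2*C)) := by
              apply mul_le_mul_of_nonneg_left _ hC0.le
              rw [← e2]; exact e1
          _ = 1/2 := by field_simp
      filter_upwards [hev] with n hn
      have hp1 : (0:ℝ) < C^(n+1) * Real.exp (-(2:ℝ)^n) := by positivity
      have hp2 : (0:ℝ) < C^(n+1+1) * Real.exp (-(2:ℝ)^(n+1)) := by positivity
      rw [Real.norm_eq_abs, Real.norm_eq_abs, abs_of_pos hp2, abs_of_pos hp1]
      have he : C^(n+1+1) * Real.exp (-(2:ℝ)^(n+1))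
          = (C * Real.exp (-(2:ℝ)^n)) * (C^(n+1) * Real.exp (-(2:ℝ)^n)) := by
        have e1 : (2:ℝ)^(n+1) = 2^n + 2^n := by rw [pow_succ]; ring
        rw [e1, neg_add, Real.exp_add, pow_succ]
        ring
      rw [he]
      exact mul_le_mul_of_nonneg_right hn (by positivity)
    set S : ℝ := ∑' n : ℕ, C ^ (n+1) * Real.exp (-(2:ℝ)^n) with hSdef
    have hS0 : 0 ≤ S := tsum_nonneg (fun n => by positivity)
    have hDiter : ∀ n : ℕ, ∀ r : ℝ, 0 ≤ r → r < 1 →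
        What r ≤ C^n * What (1 - (1-r)/2^n) := by
      intro n
      induction n with
      | zero => intro r hr hr1; simp
      | succ n ih =>
        intro r hr hr1
        have h1 : (0:ℝ) < (2:ℝ)^n := by positivity
        have h1' : (1:ℝ) ≤ (2:ℝ)^n := one_le_pow₀ one_le_two
        have hq0 : r ≤ 1 - (1-r)/2^n := by
          have : (1-r)/2^n ≤ 1-r := div_le_self (by linarith) h1'
          linarith
        have hq1 : 1 - (1-r)/2^n < 1 := by
          have : 0 < (1-r)/2^n := div_pos (by linarith) h1
          linarith
        have h2 := hDD (1 - (1-r)/2^n) ⟨by linarith, hq1⟩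
        have h3 : (1 + (1 - (1-r)/2^n))/2 = 1 - (1-r)/2^(n+1) := by
          rw [pow_succ]; field_simp; ring
        calc What r ≤ C^n * What (1 - (1-r)/2^n) := ih r hr hr1
          _ ≤ C^n * (C * What ((1 + (1 - (1-r)/2^n))/2)) :=
              mul_le_mul_of_nonneg_left h2 (by positivity)
          _ = C^(n+1) * What (1 - (1-r)/2^(n+1)) := by rw [h3]; ring
    have hmom_nonneg : ∀ x : ℝ, 0 ≤ x → 0 ≤ mom x := by
      intro x hx
      rw [hmom]
      exact setIntegral_nonneg measurableSet_Ioc fun s hs =>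
        mul_nonneg (Real.rpow_nonneg hs.1.le x) (hnn s)
    have hmomsub : ∀ p : ℝ, 0 ≤ p → ∀ aa : ℝ, 0 ≤ aa →
        (∫ s in Ioc aa 1, s^p*ω s) ≤ mom p := by
      intro p hp aa haa
      rw [hmom]
      apply setIntegral_mono_set (hrint p hp 0 1 le_rfl le_rfl)
      · rw [Filter.EventuallyLE, ae_restrict_iff' measurableSet_Ioc]
        filter_upwards with u hu
        simp only [Pi.zero_apply]
        exact mul_nonneg (Real.rpow_nonneg hu.1.le p) (hnn u)
      · exact HasSubset.Subset.eventuallyLE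
          (fun u hu => ⟨lt_of_le_of_lt haa hu.1, hu.2⟩)
    have hUpper : ∀ y : ℝ, 1 ≤ y → mom y ≤ (1 + S) * What (1 - 1/y) := by
      intro y hy
      have hy0 : 0 < y := by linarith
      have hty : 1/y ≤ 1 := by rw [div_le_one hy0]; linarith
      have ht0 : (0:ℝ) ≤ 1 - 1/y := by linarith
      have ht1 : 1 - 1/y < 1 := by
        have : 0 < 1/y := by positivity
        linarith
      have hWt : 0 ≤ What (1 - 1/y) := hWnn _
      have hInd : ∀ n : ℕ, (∫ s in Ioc (max (1 - 2^n/y) 0) (1 - 1/y), s ^ y * ω s)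
          ≤ (∑ k ∈ Finset.range n, C^(k+1)*Real.exp (-(2:ℝ)^k)) * What (1 - 1/y) := by
        intro n
        induction n with
        | zero =>
          have hmx : max (1 - 2^0/y) 0 = 1 - 1/y := by
            rw [pow_zero]; exact max_eq_left ht0
          rw [hmx, Set.Ioc_self]
          simp
        | succ n ih =>
          have h2n : (0:ℝ) < (2:ℝ)^n := by positivity
          have h2n' : (1:ℝ) ≤ (2:ℝ)^n := one_le_pow₀ one_le_two
          have hpow : (2:ℝ)^n ≤ 2^(n+1) := by rw [pow_succ]; nlinarith
          have hfrac : (2:ℝ)^n/y ≤ 2^(n+1)/y := by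
            apply div_le_div_of_nonneg_right hpow hy0.le
          have hab : max (1 - 2^(n+1)/y) 0 ≤ max (1 - 2^n/y) 0 := by
            apply max_le_max _ le_rfl
            linarith
          have hbt : max (1 - 2^n/y) 0 ≤ 1 - 1/y := by
            apply max_le _ ht0
            have h5 : 1/y ≤ 2^n/y := div_le_div_of_nonneg_right h2n' hy0.le
            linarith
          have ha0 : (0:ℝ) ≤ max (1 - 2^(n+1)/y) 0 := le_max_right _ _
          have hb0' : (0:ℝ) ≤ max (1 - 2^n/y) 0 := le_max_right _ _
          have hb1 : max (1 - 2^n/y) 0 ≤ 1 := le_trans hbt (by linarith)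
          have hsplit : (∫ s in Ioc (max (1 - 2^(n+1)/y) 0) (1-1/y), s ^ y * ω s)
              = (∫ s in Ioc (max (1 - 2^(n+1)/y) 0) (max (1 - 2^n/y) 0), s^y*ω s)
                + ∫ s in Ioc (max (1 - 2^n/y) 0) (1-1/y), s^y*ω s := by
            rw [← setIntegral_union (Set.Ioc_disjoint_Ioc_of_le le_rfl) measurableSet_Ioc
              (hrint y (by linarith) _ _ ha0 hb1)
              (hrint y (by linarith) _ (1-1/y) hb0' (by linarith)),
              Set.Ioc_union_Ioc_eq_Ioc hab hbt]
          rw [hsplit, Finset.sum_range_succ, add_mul]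
          have hpiece : (∫ s in Ioc (max (1 - 2^(n+1)/y) 0) (max (1 - 2^n/y) 0), s^y*ω s)
              ≤ C^(n+1)*Real.exp (-(2:ℝ)^n) * What (1-1/y) := by
            rcases le_or_gt (1 - 2^n/y) 0 with hb0 | hb0
            · have hbz : max (1 - 2^n/y) 0 = 0 := max_eq_right hb0
              have haz : max (1 - 2^(n+1)/y) 0 = 0 := max_eq_right (by linarith)
              rw [hbz, haz, Set.Ioc_self]
              simp only [Measure.restrict_empty, integral_zero_measure]
              exact mul_nonneg (by positivity) hWt
            · have hbe : max (1 - 2^n/y) 0 = 1 - 2^n/y := max_eq_left hb0.le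
              have hstep1 : (∫ s in Ioc (max (1 - 2^(n+1)/y) 0) (max (1 - 2^n/y) 0), s^y*ω s)
                  ≤ ∫ s in Ioc (max (1 - 2^(n+1)/y) 0) (max (1 - 2^n/y) 0), Real.exp (-(2:ℝ)^n) * ω s := by
                apply setIntegral_mono_on (hrint y (by linarith) _ _ ha0 hb1)
                  ((hωm _ _ ha0 hb1).const_mul _) measurableSet_Ioc
                intro s hs
                have hs0 : 0 < s := lt_of_le_of_lt ha0 hs.1
                have h1 : s ^ y ≤ (max (1 - 2^n/y) 0) ^ y :=
                  Real.rpow_le_rpow hs0.le hs.2 (by linarith)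
                have h2 : (max (1 - 2^n/y) 0) ^ y ≤ Real.exp (-(2:ℝ)^n) := by
                  rw [hbe]
                  have h3 : 1 - 2^n/y ≤ Real.exp (-(2^n/y)) := by
                    have := Real.add_one_le_exp (-(2^n/y))
                    linarith
                  calc (1 - 2^n/y) ^ y ≤ (Real.exp (-(2^n/y))) ^ y :=
                      Real.rpow_le_rpow (by linarith) h3 (by linarith)
                    _ = Real.exp (-(2^n/y) * y) := (Real.exp_mul _ y).symm
                    _ = Real.exp (-(2:ℝ)^n) := by
                        congr 1
                        field_simp
                exact mul_le_mul_of_nonneg_right (h1.trans h2) (hnn s)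
              have hstep2 : (∫ s in Ioc (max (1 - 2^(n+1)/y) 0) (max (1 - 2^n/y) 0), ω s)
                  ≤ What (max (1 - 2^(n+1)/y) 0) := by
                rw [hWhat]
                exact setIntegral_mono_set (hωm _ 1 ha0 le_rfl)
                  (Filter.Eventually.of_forall hnn)
                  (HasSubset.Subset.eventuallyLE (Set.Ioc_subset_Ioc_right hb1))
              have hstep3 : What (max (1 - 2^(n+1)/y) 0) ≤ C^(n+1) * What (1-1/y) := by
                have ha1 : max (1 - 2^(n+1)/y) 0 < 1 := lt_of_le_of_lt (hab.trans hbt) ht1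
                have h4 := hDiter (n+1) _ ha0 ha1
                have h6 : 1 - max (1 - 2^(n+1)/y) 0 ≤ 2^(n+1)/y := by
                  rcases le_or_gt (1 - 2^(n+1)/y) 0 with h | h
                  · have haz : max (1 - 2^(n+1)/y) 0 = 0 := max_eq_right h
                    rw [haz]; linarith
                  · have haz : max (1 - 2^(n+1)/y) 0 = 1 - 2^(n+1)/y := max_eq_left h.le
                    rw [haz]; linarith
                have h2p : (0:ℝ) < (2:ℝ)^(n+1) := by positivity
                have h7 : (1 - max (1 - 2^(n+1)/y) 0)/2^(n+1) ≤ 1/y := by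
                  rw [div_le_div_iff₀ h2p hy0]
                  have h6' := mul_le_mul_of_nonneg_right h6 hy0.le
                  rw [div_mul_cancel₀ _ (ne_of_gt hy0)] at h6'
                  linarith
                have h5 : 1 - 1/y ≤ 1 - (1 - max (1 - 2^(n+1)/y) 0)/2^(n+1) := by linarith
                have h8 : What (1 - (1 - max (1 - 2^(n+1)/y) 0)/2^(n+1)) ≤ What (1-1/y) :=
                  hWanti (1-1/y) _ ht0 h5
                calc What (max (1 - 2^(n+1)/y) 0)
                    ≤ C^(n+1) * What (1-(1 - max (1 - 2^(n+1)/y) 0)/2^(n+1)) := h4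
                  _ ≤ C^(n+1) * What (1-1/y) := mul_le_mul_of_nonneg_left h8 (by positivity)
              calc (∫ s in Ioc (max (1 - 2^(n+1)/y) 0) (max (1 - 2^n/y) 0), s^y*ω s)
                  ≤ ∫ s in Ioc (max (1 - 2^(n+1)/y) 0) (max (1 - 2^n/y) 0), Real.exp (-(2:ℝ)^n) * ω s := hstep1
                _ = Real.exp (-(2:ℝ)^n) * ∫ s in Ioc (max (1 - 2^(n+1)/y) 0) (max (1 - 2^n/y) 0), ω s :=
                    integral_const_mul _ _
                _ ≤ Real.exp (-(2:ℝ)^n) * What (max (1 - 2^(n+1)/y) 0) :=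
                    mul_le_mul_of_nonneg_left hstep2 (Real.exp_nonneg _)
                _ ≤ Real.exp (-(2:ℝ)^n) * (C^(n+1) * What (1-1/y)) :=
                    mul_le_mul_of_nonneg_left hstep3 (Real.exp_nonneg _)
                _ = C^(n+1) * Real.exp (-(2:ℝ)^n) * What (1-1/y) := by ring
          linarith [ih]
      obtain ⟨n, hn⟩ := pow_unbounded_of_one_lt y (one_lt_two)
      have hmax : max (1 - 2^n/y) 0 = 0 := by
        apply max_eq_right
        have : (1:ℝ) ≤ 2^n/y := (one_le_div hy0).2 hn.le
        linarith
      have h9 := hInd n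
      rw [hmax] at h9
      have h10 : (∑ k ∈ Finset.range n, C^(k+1)*Real.exp (-(2:ℝ)^k)) ≤ S :=
        hSummable.sum_le_tsum _ (fun k _ => by positivity)
      have h11 : mom y = (∫ s in Ioc (0:ℝ) (1-1/y), s^y*ω s)
          + ∫ s in Ioc (1-1/y) 1, s^y*ω s := by
        rw [hmom, ← setIntegral_union (Set.Ioc_disjoint_Ioc_of_le le_rfl) measurableSet_Ioc
          (hrint y (by linarith) 0 (1-1/y) le_rfl (by linarith))
          (hrint y (by linarith) (1-1/y) 1 ht0 le_rfl),
          Set.Ioc_union_Ioc_eq_Ioc ht0 ht1.le]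
      have h12 : (∫ s in Ioc (1-1/y) 1, s^y*ω s) ≤ What (1-1/y) := by
        rw [hWhat]
        apply setIntegral_mono_on (hrint y (by linarith) (1-1/y) 1 ht0 le_rfl)
          (hωm (1-1/y) 1 ht0 le_rfl) measurableSet_Ioc
        intro s hs
        have hs0 : 0 < s := lt_of_le_of_lt ht0 hs.1
        have h14 := Real.rpow_le_one hs0.le hs.2 (by linarith : (0:ℝ) ≤ y)
        nlinarith [hnn s]
      have h15 : (∫ s in Ioc (0:ℝ) (1-1/y), s^y*ω s) ≤ S * What (1-1/y) :=
        le_trans h9 (mul_le_mul_of_nonneg_right h10 hWt)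
      linarith
    have hHalf : ∀ x : ℝ, 1 ≤ x → x ≤ 2 → What (1/2 : ℝ) ≤ 4 * mom x := by
      intro x h1 h2
      have hx0 : (0:ℝ) ≤ x := by linarith
      have key : (∫ s in Ioc (1/2:ℝ) 1, s^x*ω s) ≤ mom x := hmomsub x hx0 (1/2) (by norm_num)
      have key2 : (1/4:ℝ) * What (1/2) ≤ ∫ s in Ioc (1/2:ℝ) 1, s^x*ω s := by
        have hpt : ∀ s ∈ Ioc (1/2:ℝ) 1, (1/4:ℝ) * ω s ≤ s^x*ω s := by
          intro s hs
          have h3 : ((1:ℝ)/2)^x ≤ s ^ x := Real.rpow_le_rpow (by norm_num) hs.1.le hx0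
          have h4 : ((1:ℝ)/2)^(2:ℝ) ≤ ((1:ℝ)/2)^x :=
            Real.rpow_le_rpow_of_exponent_ge (by norm_num) (by norm_num) h2
          have h5 : ((1:ℝ)/2)^(2:ℝ) = 1/4 := by
            rw [show (2:ℝ) = ((2:ℕ):ℝ) by norm_num, Real.rpow_natCast]
            norm_num
          nlinarith [hnn s]
        calc (1/4:ℝ)*What (1/2) = ∫ s in Ioc (1/2:ℝ) 1, (1/4:ℝ)*ω s := by
              rw [integral_const_mul, ← hWhat]
          _ ≤ ∫ s in Ioc (1/2:ℝ) 1, s^x*ω s :=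
              setIntegral_mono_on ((hωm (1/2) 1 (by norm_num) le_rfl).const_mul _)
                (hrint x hx0 (1/2) 1 (by norm_num) le_rfl) measurableSet_Ioc hpt
      linarith
    have hLow : ∀ z : ℝ, 1 ≤ z → What (1 - 1/z) ≤ 4*C*mom z := by
      intro z hz
      have hz0 : 0 < z := by linarith
      have hz1 : 1/z ≤ 1 := by rw [div_le_one hz0]; linarith
      have ht0 : (0:ℝ) ≤ 1 - 1/z := by linarith
      have hmz : 0 ≤ mom z := hmom_nonneg z (by linarith)
      rcases le_or_gt 2 z with h2 | h2
      · have hu2 : 1/z ≤ 1/2 := one_div_le_one_div_of_le (by norm_num) h2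
        have hq : (1/4:ℝ) ≤ (1 - 1/z) ^ (z:ℝ) := by
          have h41 : (4:ℝ)^(-(1/z)) ≤ 1 - 1/z := aux_quarter (1/z) (by positivity) hu2
          have e1 : ((4:ℝ)^(-(1/z):ℝ))^(z:ℝ) = (4:ℝ)^((-(1/z))*z) :=
            (Real.rpow_mul (by norm_num) _ _).symm
          have e2 : (-(1/z))*z = (-1:ℝ) := by field_simp
          have e3 : (4:ℝ)^(-1:ℝ) = 1/4 := by
            rw [Real.rpow_neg (by norm_num : (0:ℝ) ≤ 4), Real.rpow_one]
            norm_num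
          calc (1/4:ℝ) = ((4:ℝ)^(-(1/z):ℝ))^(z:ℝ) := by rw [e1, e2, e3]
            _ ≤ (1 - 1/z)^(z:ℝ) := Real.rpow_le_rpow (by positivity) h41 hz0.le
        have key : (1 - 1/z)^(z:ℝ) * What (1 - 1/z) ≤ mom z := by
          have c1 : (1 - 1/z)^(z:ℝ) * What (1 - 1/z)
              = ∫ s in Ioc (1-1/z) 1, (1 - 1/z)^(z:ℝ) * ω s := by
            rw [integral_const_mul, ← hWhat]
          rw [c1]
          calc ∫ s in Ioc (1-1/z) 1, (1 - 1/z)^(z:ℝ) * ω s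
              ≤ ∫ s in Ioc (1-1/z) 1, s^(z:ℝ) * ω s := by
                apply setIntegral_mono_on ((hωm _ 1 ht0 le_rfl).const_mul _)
                  (hrint z (by linarith) _ 1 ht0 le_rfl) measurableSet_Ioc
                intro s hs
                exact mul_le_mul_of_nonneg_right
                  (Real.rpow_le_rpow ht0 hs.1.le hz0.le) (hnn s)
            _ ≤ mom z := hmomsub z (by linarith) _ ht0
        linarith [mul_le_mul_of_nonneg_right hq (hWnn (1-1/z)), key, mul_nonneg (sub_nonneg.2 hC1) hmz]
      · have h6 := hHalf z hz h2.le
        have h7 : What (1-1/z) ≤ What 0 := hWanti 0 _ le_rfl ht0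
        have h8 := hDD 0 ⟨le_rfl, one_pos⟩
        have h8' : ((1:ℝ)+0)/2 = 1/2 := by norm_num
        rw [h8'] at h8
        have i1 := mul_le_mul_of_nonneg_left h6 hC0.le
        linarith [h7, h8, i1, mul_nonneg (sub_nonneg.2 hC1) hmz]
    have hMomHalf : ∀ x : ℝ, 1 ≤ x → mom (x/2) ≤ (4*C^2*(1+S)) * mom x := by
      intro x hx
      have hx0 : (0:ℝ) < x := by linarith
      have hmx : 0 ≤ mom x := hmom_nonneg x (by linarith)
      rcases le_or_gt 2 x with h2 | h2
      · have hy : (1:ℝ) ≤ x/2 := by linarith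
        have h1 := hUpper (x/2) hy
        have he : 1 - 1/(x/2) = 1 - 2/x := by
          rw [one_div_div]
        rw [he] at h1
        have hr : (1 - 2/x) ∈ Ico (0:ℝ) 1 := by
          constructor
          · have : 2/x ≤ 1 := by rw [div_le_one hx0]; linarith
            linarith
          · have : 0 < 2/x := by positivity
            linarith
        have h3 := hDD _ hr
        have he2 : (1 + (1 - 2/x))/2 = 1 - 1/x := by
          have hh : (1:ℝ) + (1 - 2/x) = 2*(1 - 1/x) := by
            rw [mul_sub, mul_one_div]
            ring
          rw [hh, mul_div_cancel_left₀ _ (by norm_num : (2:ℝ) ≠ 0)]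
        rw [he2] at h3
        have h4 := hLow x hx
        have i1 : (1+S)*What (1-2/x) ≤ (1+S)*(C*What (1-1/x)) :=
          mul_le_mul_of_nonneg_left h3 (by linarith)
        have i2 : C*What (1-1/x) ≤ C*(4*C*mom x) := mul_le_mul_of_nonneg_left h4 hC0.le
        have i3 : (1+S)*(C*What (1-1/x)) ≤ (1+S)*(C*(4*C*mom x)) :=
          mul_le_mul_of_nonneg_left i2 (by linarith)
        calc mom (x/2) ≤ (1+S)*What (1-2/x) := h1
          _ ≤ (1+S)*(C*(4*C*mom x)) := le_trans i1 i3
          _ = (4*C^2*(1+S))*mom x := by ring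
      · have h5 : mom (x/2) ≤ What 0 := by
          rw [hmom, hWhat]
          apply setIntegral_mono_on (hrint (x/2) (by linarith) 0 1 le_rfl le_rfl)
            (hωm 0 1 le_rfl le_rfl) measurableSet_Ioc
          intro s hs
          have h13 := Real.rpow_le_one hs.1.le hs.2 (by linarith : (0:ℝ) ≤ x/2)
          nlinarith [hnn s]
        have h6 := hHalf x hx h2.le
        have h8 := hDD 0 ⟨le_rfl, one_pos⟩
        have h8' : ((1:ℝ)+0)/2 = 1/2 := by norm_num
        rw [h8'] at h8
        have i1 : C * What (1/2) ≤ C * (4 * mom x) := mul_le_mul_of_nonneg_left h6 hC0.le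
        have i2 : 4*C*mom x ≤ (4*C^2*(1+S))*mom x := by
          nlinarith [mul_nonneg (mul_nonneg (by linarith : (0:ℝ) ≤ 4*C) hmx)
            (by linarith : (0:ℝ) ≤ C - 1),
            mul_nonneg (mul_nonneg (mul_nonneg (by linarith : (0:ℝ) ≤ 4*C)
              (by linarith : (0:ℝ) ≤ C)) hmx) hS0]
        linarith
    have hK0 : (0:ℝ) < 4*C^2*(1+S) := by nlinarith [hS0, hC0]
    refine ⟨1/2, by norm_num, (4*C^2*(1+S))^2, pow_pos hK0 2, fun x hx => ?_⟩
    have hx0 : (0:ℝ) ≤ x := by linarith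
    constructor
    · -- lower bound : mom x ^ 2 ≤ 2 * momWW x
      set f : ℝ → ℝ := fun s => s ^ x * ω s with hfdef
      have hfint : IntegrableOn f (Ioc 0 1) := hrint x hx0 0 1 le_rfl le_rfl
      have hficc : IntegrableOn f (Icc 0 1) := by
        rw [IntegrableOn, Measure.restrict_congr_set (Ioc_ae_eq_Icc (a := (0:ℝ)) (b := (1:ℝ))).symm]
        exact hfint
      have hswap := aux_swap f f 0 hfint hfint
      have hAcont : ContinuousOn (fun s => ∫ u in Ioc 0 s, f u) (Icc 0 1) :=
        intervalIntegral.continuousOn_primitive hficc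
      have hAnn : ∀ s : ℝ, 0 ≤ s → 0 ≤ ∫ u in Ioc 0 s, f u := by
        intro s hs
        apply setIntegral_nonneg measurableSet_Ioc
        intro u hu
        exact mul_nonneg (Real.rpow_nonneg hu.1.le x) (hnn u)
      have hAle : ∀ s : ℝ, s ≤ 1 → (∫ u in Ioc 0 s, f u) ≤ mom x := by
        intro s hs
        rw [hmom]
        apply setIntegral_mono_set hfint
        · rw [Filter.EventuallyLE, ae_restrict_iff' measurableSet_Ioc]
          filter_upwards with u hu
          simp only [Pi.zero_apply]
          exact mul_nonneg (Real.rpow_nonneg hu.1.le x) (hnn u)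
        · exact HasSubset.Subset.eventuallyLE (Set.Ioc_subset_Ioc_right hs)
      have hsum : ∀ s ∈ Icc (0:ℝ) 1,
          (∫ u in Ioc 0 s, f u) + (∫ u in Ioc s 1, f u) = mom x := by
        intro s hs
        rw [hmom, ← setIntegral_union (Set.Ioc_disjoint_Ioc_of_le le_rfl) measurableSet_Ioc
          (hfint.mono_set (fun u hu => ⟨hu.1, hu.2.trans hs.2⟩))
          (hfint.mono_set (fun u hu => ⟨lt_of_le_of_lt hs.1 hu.1, hu.2⟩)),
          Set.Ioc_union_Ioc_eq_Ioc hs.1 hs.2]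
      have hfaesm : AEStronglyMeasurable f (volume.restrict (Ioc 0 1)) :=
        hfint.aestronglyMeasurable
      have hfω : ∀ s ∈ Ioc (0:ℝ) 1, f s ≤ ω s := by
        intro s hs
        have h14 := Real.rpow_le_one hs.1.le hs.2 hx0
        simp only [hfdef]
        nlinarith [hnn s]
      have hfnn : ∀ s ∈ Ioc (0:ℝ) 1, 0 ≤ f s := fun s hs =>
        mul_nonneg (Real.rpow_nonneg hs.1.le x) (hnn s)
      have hsub01 : Ioc (0:ℝ) 1 ⊆ Icc 0 1 := fun u hu => ⟨hu.1.le, hu.2⟩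
      have hT1int : IntegrableOn (fun s => f s * ∫ u in Ioc 0 s, f u) (Ioc 0 1) := by
        apply Integrable.mono' (hω1.const_mul (mom x))
          (hfaesm.mul ((hAcont.aestronglyMeasurable measurableSet_Icc).mono_measure
            (Measure.restrict_mono hsub01 le_rfl)))
        rw [ae_restrict_iff' measurableSet_Ioc]
        filter_upwards with s hs
        show ‖f s * ∫ u in Ioc 0 s, f u‖ ≤ mom x * ω s
        rw [Real.norm_eq_abs, abs_of_nonneg (mul_nonneg (hfnn s hs) (hAnn s hs.1.le))]
        calc f s * (∫ u in Ioc 0 s, f u) ≤ f s * mom x :=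
            mul_le_mul_of_nonneg_left (hAle s hs.2) (hfnn s hs)
          _ ≤ ω s * mom x := mul_le_mul_of_nonneg_right (hfω s hs) (hmom_nonneg x hx0)
          _ = mom x * ω s := mul_comm _ _
      have hBnn : ∀ s : ℝ, 0 ≤ s → 0 ≤ ∫ u in Ioc s 1, f u := fun s hs =>
        setIntegral_nonneg measurableSet_Ioc fun u hu =>
          mul_nonneg (Real.rpow_nonneg (hs.trans hu.1.le) x) (hnn u)
      have hBcont : ContinuousOn (fun s => ∫ u in Ioc s 1, f u) (Icc 0 1) := by
        refine ContinuousOn.congr (f := fun s => mom x - ∫ u in Ioc 0 s, f u)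
          (continuousOn_const.sub hAcont) ?_
        intro s hs
        have := hsum s hs
        simp only
        linarith
      have hT2int : IntegrableOn (fun s => f s * ∫ u in Ioc s 1, f u) (Ioc 0 1) := by
        apply Integrable.mono' (hω1.const_mul (mom x))
          (hfaesm.mul ((hBcont.aestronglyMeasurable measurableSet_Icc).mono_measure
            (Measure.restrict_mono hsub01 le_rfl)))
        rw [ae_restrict_iff' measurableSet_Ioc]
        filter_upwards with s hs
        have hBle : (∫ u in Ioc s 1, f u) ≤ mom x := by
          have h1 := hsum s (hsub01 hs)
          have h2 := hAnn s hs.1.le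
          linarith
        show ‖f s * ∫ u in Ioc s 1, f u‖ ≤ mom x * ω s
        rw [Real.norm_eq_abs, abs_of_nonneg (mul_nonneg (hfnn s hs) (hBnn s hs.1.le))]
        calc f s * (∫ u in Ioc s 1, f u) ≤ f s * mom x :=
            mul_le_mul_of_nonneg_left hBle (hfnn s hs)
          _ ≤ ω s * mom x := mul_le_mul_of_nonneg_right (hfω s hs) (hmom_nonneg x hx0)
          _ = mom x * ω s := mul_comm _ _
      have hsq : mom x * mom x = (∫ s in Ioc (0:ℝ) 1, f s * (∫ u in Ioc 0 s, f u))
          + ∫ s in Ioc (0:ℝ) 1, f s * (∫ u in Ioc s 1, f u) :=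
        calc mom x * mom x = ∫ s in Ioc (0:ℝ) 1, f s * mom x := by
              rw [integral_mul_const]
              congr 1
              exact hmom x
          _ = ∫ s in Ioc (0:ℝ) 1, (f s * (∫ u in Ioc 0 s, f u)
              + f s * (∫ u in Ioc s 1, f u)) := by
              apply setIntegral_congr_fun measurableSet_Ioc
              intro s hs
              dsimp only
              have h5 := hsum s (hsub01 hs)
              rw [← h5]
              ring
          _ = _ := integral_add hT1int hT2int
      have hTT : (∫ s in Ioc (0:ℝ) 1, f s * (∫ u in Ioc 0 s, f u))
          = ∫ s in Ioc (0:ℝ) 1, f s * (∫ u in Ioc s 1, f u) := by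
        have e2 : (∫ s in Ioc (0:ℝ) 1, f s * (∫ u in Ioc 0 s, f u))
            = ∫ u in Ioc (0:ℝ) 1, (∫ s in Ioc 0 u, f s) * f u :=
          setIntegral_congr_fun measurableSet_Ioc (fun s _ => mul_comm _ _)
        rw [e2, ← hswap]
      have hT2le : (∫ s in Ioc (0:ℝ) 1, f s * (∫ u in Ioc s 1, f u)) ≤ momWW x := by
        rw [hmomWW]
        apply setIntegral_mono_on hT2int (hWWint x hx0) measurableSet_Ioc
        intro s hs
        have hBW : (∫ u in Ioc s 1, f u) ≤ What s := by
          rw [hWhat]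
          apply setIntegral_mono_on (hfint.mono_set (fun u hu => ⟨hs.1.trans hu.1, hu.2⟩))
            (hωm s 1 hs.1.le le_rfl) measurableSet_Ioc
          intro u hu
          exact hfω u ⟨hs.1.trans hu.1, hu.2⟩
        calc f s * (∫ u in Ioc s 1, f u) ≤ f s * What s :=
            mul_le_mul_of_nonneg_left hBW (hfnn s hs)
          _ = s^x * (ω s * What s) := by simp only [hfdef]; ring
      rw [pow_two]
      linarith [hsq, hTT, hT2le]
    · -- upper bound
      have hhalf : momWW x ≤ mom (x/2) * mom (x/2) := by
        rw [hmomWW]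
        have hpt : ∀ s ∈ Ioc (0:ℝ) 1, s^x * (ω s * What s) ≤ (s^(x/2:ℝ) * ω s) * mom (x/2) := by
          intro s hs
          have hs0 : 0 < s := hs.1
          have hWb : s^(x/2:ℝ) * What s ≤ mom (x/2) := by
            have c1 : s^(x/2:ℝ) * What s = ∫ u in Ioc s 1, s^(x/2:ℝ) * ω u := by
              rw [integral_const_mul, ← hWhat]
            rw [c1]
            calc ∫ u in Ioc s 1, s^(x/2:ℝ) * ω u ≤ ∫ u in Ioc s 1, u^(x/2:ℝ) * ω u := by
                  apply setIntegral_mono_on ((hωm s 1 hs0.le le_rfl).const_mul _)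
                    (hrint (x/2) (by linarith) s 1 hs0.le le_rfl) measurableSet_Ioc
                  intro u hu
                  exact mul_le_mul_of_nonneg_right
                    (Real.rpow_le_rpow hs0.le hu.1.le (by linarith)) (hnn u)
              _ ≤ mom (x/2) := hmomsub (x/2) (by linarith) s hs0.le
          have hsplit2 : s^x = s^(x/2:ℝ) * s^(x/2:ℝ) := by
            rw [← Real.rpow_add hs0]
            norm_num
          calc s^x * (ω s * What s) = (s^(x/2:ℝ) * ω s) * (s^(x/2:ℝ) * What s) := by
                linear_combination (ω s * What s) * hsplit2
            _ ≤ (s^(x/2:ℝ) * ω s) * mom (x/2) := by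
              apply mul_le_mul_of_nonneg_left hWb
              exact mul_nonneg (Real.rpow_nonneg hs0.le _) (hnn s)
        calc (∫ s in Ioc (0:ℝ) 1, s^x * (ω s * What s))
            ≤ ∫ s in Ioc (0:ℝ) 1, (s^(x/2:ℝ) * ω s) * mom (x/2) :=
              setIntegral_mono_on (hWWint x hx0)
                ((hrint (x/2) (by linarith) 0 1 le_rfl le_rfl).mul_const _)
                measurableSet_Ioc hpt
          _ = mom (x/2) * mom (x/2) := by
              rw [integral_mul_const]
              congr 1
              exact (hmom (x/2)).symm
      have hm2 : mom (x/2) ≤ (4*C^2*(1+S)) * mom x := hMomHalf x hx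
      have hm0 : 0 ≤ mom (x/2) := hmom_nonneg _ (by linarith)
      have hmx : 0 ≤ mom x := hmom_nonneg _ (by linarith)
      have hmul := mul_le_mul hm2 hm2 hm0 (mul_nonneg hK0.le hmx)
      calc momWW x ≤ mom (x/2) * mom (x/2) := hhalf
        _ ≤ ((4*C^2*(1+S)) * mom x) * ((4*C^2*(1+S)) * mom x) := hmul
        _ = (4*C^2*(1+S))^2 * mom x ^2 := by ring
end

section
/- Let 1 < p < ∞ and ω ∈ D̂, and let p' = p/(p-1). Then ∫_0^1 (1-r)^{p'} / ω̂(r)^{p'-1} dr = ∞ if and only if Σ_{k=0}^∞ 1/((k+1)^{2+p'} ω_k^{p'-1}) = ∞, where ω_k = ∫_0^1 s^k ω(s) ds. -/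
open MeasureTheory Set
open scoped NNReal ENNReal

lemma phi_summable {C : ℝ} (hC : 0 ≤ C) :
    Summable (fun i : ℕ => C ^ (i + 1) * Real.exp (-(2 ^ i : ℝ) / 2)) := by
  have h2 : Filter.Tendsto (fun i : ℕ => C * Real.exp (-(2 ^ i : ℝ) / 2))
      Filter.atTop (nhds 0) := by
    have hpow : Filter.Tendsto (fun i : ℕ => (2:ℝ) ^ i) Filter.atTop Filter.atTop :=
      tendsto_pow_atTop_atTop_of_one_lt (by norm_num)
    have h3 : Filter.Tendsto (fun i : ℕ => Real.exp (-(2 ^ i : ℝ) / 2)) Filter.atTop (nhds 0) := by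
      refine Real.tendsto_exp_atBot.comp ?_
      apply Filter.Tendsto.atBot_div_const (by norm_num : (0:ℝ) < 2)
      exact Filter.tendsto_neg_atBot_iff.mpr hpow
    simpa using h3.const_mul C
  refine summable_of_ratio_norm_eventually_le (r := 1/2) (by norm_num) ?_
  filter_upwards [h2.eventually_le_const (by norm_num : (0:ℝ) < 1/2)] with i hi
  have he : Real.exp (-(2 ^ (i+1) : ℝ) / 2) =
      Real.exp (-(2 ^ i : ℝ) / 2) * Real.exp (-(2 ^ i : ℝ) / 2) := by
    rw [← Real.exp_add]; ring_nf
  have hnn : (0:ℝ) ≤ C ^ (i + 1) * Real.exp (-(2 ^ i : ℝ) / 2) :=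
    mul_nonneg (pow_nonneg hC _) (Real.exp_pos _).le
  have hnn2 : (0:ℝ) ≤ C ^ (i + 1 + 1) * Real.exp (-(2 ^ (i+1) : ℝ) / 2) :=
    mul_nonneg (pow_nonneg hC _) (Real.exp_pos _).le
  rw [Real.norm_of_nonneg hnn2, Real.norm_of_nonneg hnn, he]
  calc C ^ (i + 1 + 1) * (Real.exp (-(2 ^ i : ℝ) / 2) * Real.exp (-(2 ^ i : ℝ) / 2))
      = (C * Real.exp (-(2 ^ i : ℝ) / 2)) * (C ^ (i+1) * Real.exp (-(2 ^ i : ℝ) / 2)) := by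
        ring
    _ ≤ (1/2) * (C ^ (i+1) * Real.exp (-(2 ^ i : ℝ) / 2)) :=
        mul_le_mul_of_nonneg_right hi hnn

lemma tsum_top_mono {a b : ℕ → ENNReal} {c : ENNReal} (hc : c ≠ ⊤)
    (h : ∀ k, a k ≤ c * b k) (ha : ∑' k, a k = ⊤) : ∑' k, b k = ⊤ := by
  by_contra hb
  have h1 : (∑' k, a k) ≤ c * ∑' k, b k := by
    calc (∑' k, a k) ≤ ∑' k, c * b k := ENNReal.tsum_le_tsum h
    _ = c * ∑' k, b k := ENNReal.tsum_mul_left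
  rw [ha] at h1
  exact (ENNReal.mul_ne_top hc hb) (top_le_iff.mp h1)

lemma not_summable_iff_ofReal {b : ℕ → ℝ} (h : ∀ k, 0 ≤ b k) :
    ¬ Summable b ↔ ∑' k, ENNReal.ofReal (b k) = ⊤ := by
  have h1 : ∀ k, ENNReal.ofReal (b k) = (((b k).toNNReal : ℝ≥0) : ENNReal) := fun k => rfl
  simp_rw [h1]
  rw [ENNReal.tsum_coe_eq_top_iff_not_summable_coe]
  constructor <;> intro hs hc <;> apply hs
  · refine hc.congr fun k => ?_
    exact Real.coe_toNNReal _ (h k)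
  · refine hc.congr fun k => ?_
    exact (Real.coe_toNNReal _ (h k)).symm


lemma aux_R1 {P B CB x1 x2 : ℝ} (hP : 0 < P) (hB : 0 < B) (hCB : 0 < CB)
    (hx1 : 0 < x1) (hx2 : 0 < x2) (h12 : x1^2 ≤ x1*x2) :
    1/P/(B/CB) * (1/(x1*x2)) ≤ CB * (1/(x1^2*P*B)) := by
  have hL : 1/P/(B/CB) * (1/(x1*x2)) = CB/(P*B*(x1*x2)) := by
    field_simp
  have hR : CB * (1/(x1^2*P*B)) = CB/(x1^2*(P*B)) := by ring
  rw [hL, hR]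
  apply div_le_div_of_nonneg_left hCB.le (by positivity)
  calc x1^2*(P*B) = (P*B)*x1^2 := by ring
    _ ≤ (P*B)*(x1*x2) := mul_le_mul_of_nonneg_left h12 (by positivity)
    _ = P*B*(x1*x2) := by ring

lemma aux_R2 {P1 P2 B T x1 x2 : ℝ} (hP1 : 0 < P1) (hP2 : 0 < P2) (hB : 0 < B)
    (hT : 0 < T) (hx1 : 0 < x1) (hx2 : 0 < x2)
    (hPT : P2 ≤ T*P1) (hx21 : x2 ≤ 2*x1) :
    1/(x1^2*P1*B) ≤ (T*2) * (1/P2/B * (1/(x1*x2))) := by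
  have hR : (T*2) * (1/P2/B * (1/(x1*x2))) = (T*2)/(P2*B*(x1*x2)) := by
    field_simp
  rw [hR, div_le_div_iff₀ (by positivity) (by positivity)]
  have key : P2*x2 ≤ (T*P1)*(2*x1) := by
    exact mul_le_mul hPT hx21 hx2.le (by positivity)
  calc 1*(P2*B*(x1*x2)) = (P2*x2)*(B*x1) := by ring
    _ ≤ ((T*P1)*(2*x1))*(B*x1) := mul_le_mul_of_nonneg_right key (by positivity)
    _ = T*2 * (x1^2*P1*B) := by ring

lemma aux_R3 {N B M T : ℝ} (hN : 0 < N) (hB : 0 < B) (hM : 0 < M)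
    (h : M ≤ T*B) : 1/(N*B) ≤ T*(1/(N*M)) := by
  have hT : 0 < T := by
    rcases le_or_gt T 0 with hT | hT
    · nlinarith
    · exact hT
  rw [mul_one_div, div_le_div_iff₀ (by positivity) (by positivity)]
  calc 1*(N*M) = N*M := by ring
    _ ≤ N*(T*B) := mul_le_mul_of_nonneg_left h hN.le
    _ = T*(N*B) := by ring

set_option maxHeartbeats 2000000 in
/-- For 1 < p < ∞, p' = p/(p-1) and ω ∈ D̂:
∫_0^1 (1-r)^{p'}/ω̂(r)^{p'-1} dr = ∞ iff Σ_k 1/((k+1)^{2+p'} ω_k^{p'-1}) = ∞. -/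
theorem stmt_18 (p p' : ℝ) (hp : 1 < p) (hp' : p' = p / (p - 1))
    (ω : ℝ → ℝ) (hnn : ∀ r, 0 ≤ ω r)
    (hInt : IntegrableOn ω (Set.Ico (0:ℝ) 1))
    (What : ℝ → ℝ) (hWhat : ∀ r, What r = ∫ s in Set.Ioc r 1, ω s)
    (hpos : ∀ r ∈ Set.Ico (0:ℝ) 1, 0 < What r)
    (hD : ∃ C ≥ (1:ℝ), ∀ r ∈ Set.Ico (0:ℝ) 1, What r ≤ C * What ((1 + r) / 2))
    (mom : ℝ → ℝ) (hmom : ∀ x, mom x = ∫ s in Set.Ioc (0:ℝ) 1, s ^ x * ω s) :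
    (¬ IntegrableOn (fun r : ℝ => (1 - r) ^ p' / What r ^ (p' - 1))
        (Set.Ioo (0:ℝ) 1)) ↔
    ¬ Summable (fun k : ℕ => 1 / (((k : ℝ) + 1) ^ (2 + p') * mom (k : ℝ) ^ (p' - 1))) := by
  obtain ⟨C, hC1, hC⟩ := hD
  have hC0 : (0:ℝ) < C := lt_of_lt_of_le one_pos hC1
  have hp'1 : 1 < p' := by
    rw [hp']
    rw [lt_div_iff₀ (by linarith)]
    linarith
  have hp'0 : 0 < p' := by linarith
  have hβ : 0 < p' - 1 := by linarith
  -- the dyadic points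
  set rr : ℕ → ℝ := fun k => 1 - 1/((k:ℝ)+1) with hrr_def
  have hrrk : ∀ k : ℕ, 0 ≤ rr k ∧ rr k < 1 := by
    intro k
    have h1 : 0 < ((k:ℝ)+1) := by positivity
    constructor
    · simp only [hrr_def, sub_nonneg]
      rw [div_le_one h1]; linarith [Nat.cast_nonneg (α := ℝ) k]
    · simp only [hrr_def, sub_lt_self_iff]
      positivity
  have hrmono : ∀ k : ℕ, rr k < rr (k+1) := by
    intro k
    simp only [hrr_def, sub_lt_sub_iff_left]
    rw [div_lt_div_iff₀ (by positivity) (by positivity)]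
    push_cast; linarith
  have hrmono' : ∀ i j : ℕ, i ≤ j → rr i ≤ rr j := by
    intro i j hij
    induction j with
    | zero => simp_all
    | succ n ih =>
      rcases Nat.lt_or_ge i (n+1) with h | h
      · exact le_trans (ih (by omega)) (hrmono n).le
      · have : i = n + 1 := by omega
        subst this; rfl
  have hWnn : ∀ a : ℝ, 0 ≤ What a := by
    intro a; rw [hWhat]
    exact setIntegral_nonneg measurableSet_Ioc (fun s _ => hnn s)
  have hIntsub : ∀ a : ℝ, 0 ≤ a → IntegrableOn ω (Ioc a 1) := by
    intro a ha
    refine hInt.mono_set_ae (ae_le_set.mpr ?_)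
    refine measure_mono_null (fun x hx => ?_) (measure_singleton (1:ℝ))
    simp only [mem_diff, mem_Ioc, mem_Ico, not_and, not_lt] at hx
    have := hx.2 (le_trans ha hx.1.1.le)
    simp only [mem_singleton_iff]
    linarith [hx.1.2]
  have hAnti : ∀ a b : ℝ, 0 ≤ a → a ≤ b → What b ≤ What a := by
    intro a b ha hab
    rw [hWhat, hWhat]
    exact setIntegral_mono_set (hIntsub a ha) (Filter.Eventually.of_forall hnn)
      (HasSubset.Subset.eventuallyLE (Ioc_subset_Ioc_left hab))
  have hWpos : ∀ k : ℕ, 0 < What (rr k) := fun k => hpos _ ⟨(hrrk k).1, (hrrk k).2⟩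
  have hWd : ∀ k : ℕ, What (rr k) ≤ C * What (rr (k+1)) := by
    intro k
    refine le_trans (hC (rr k) ⟨(hrrk k).1, (hrrk k).2⟩) ?_
    apply mul_le_mul_of_nonneg_left _ hC0.le
    apply hAnti
    · exact (hrrk (k+1)).1
    · -- rr (k+1) ≤ (1 + rr k)/2
      simp only [hrr_def]
      push_cast
      have hx : (0:ℝ) < (k:ℝ)+1 := by positivity
      have key : 1/(2*((k:ℝ)+1)) ≤ 1/((k:ℝ)+1+1) := by
        apply one_div_le_one_div_of_le (by positivity)
        linarith [Nat.cast_nonneg (α := ℝ) k]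
      have heq : (1 + (1 - 1/((k:ℝ)+1)))/2 = 1 - 1/(2*((k:ℝ)+1)) := by
        field_simp; ring
      rw [heq]
      linarith
  -- monomial integrability
  have hMonInt : ∀ k : ℕ, IntegrableOn (fun s : ℝ => s^k * ω s) (Ioc (0:ℝ) 1) := by
    intro k
    refine Integrable.mono (hIntsub 0 le_rfl) ?_ ?_
    · exact ((continuous_pow k).aestronglyMeasurable).mul (hIntsub 0 le_rfl).1
    · refine (ae_restrict_iff' measurableSet_Ioc).mpr (Filter.Eventually.of_forall ?_)
      intro s hs
      rw [Real.norm_of_nonneg (mul_nonneg (pow_nonneg hs.1.le k) (hnn s)),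
        Real.norm_of_nonneg (hnn s)]
      have : s^k ≤ 1 := pow_le_one₀ hs.1.le hs.2
      nlinarith [hnn s]
  have hmomk : ∀ k : ℕ, mom (k:ℝ) = ∫ s in Ioc (0:ℝ) 1, s^k * ω s := by
    intro k
    rw [hmom]
    simp [Real.rpow_natCast]
  -- lower bound for moments
  have hmlow : ∀ k : ℕ, What (rr k) / 3 ≤ mom (k:ℝ) := by
    intro k
    have h13 : (1/3 : ℝ) ≤ (rr k)^k := by
      rcases Nat.eq_zero_or_pos k with hk | hk
      · subst hk; norm_num
      · have hkR : (0:ℝ) < (k:ℝ) := by exact_mod_cast hk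
        have hx : rr k = (k:ℝ)/((k:ℝ)+1) := by
          simp only [hrr_def]; field_simp; ring
        have hinv : ((k:ℝ)+1)/(k:ℝ) = 1 + 1/(k:ℝ) := by field_simp
        have hexp : (((k:ℝ)+1)/(k:ℝ))^k ≤ 3 := by
          have h1 : ((k:ℝ)+1)/(k:ℝ) ≤ Real.exp (1/(k:ℝ)) := by
            rw [hinv]
            have := Real.add_one_le_exp (1/(k:ℝ))
            linarith
          have h2 : (((k:ℝ)+1)/(k:ℝ))^k ≤ (Real.exp (1/(k:ℝ)))^k :=
            pow_le_pow_left₀ (by positivity) h1 k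
          have h3 : (Real.exp (1/(k:ℝ)))^k = Real.exp 1 := by
            rw [← Real.exp_nat_mul]
            congr 1
            field_simp
          rw [h3] at h2
          refine h2.trans (le_trans Real.exp_one_lt_d9.le (by norm_num))
        have hpowpos : (0:ℝ) < (((k:ℝ)+1)/(k:ℝ))^k := by positivity
        have : (1/3 : ℝ) ≤ 1/((((k:ℝ)+1)/(k:ℝ))^k) :=
          one_div_le_one_div_of_le hpowpos hexp
        calc (1/3 : ℝ) ≤ 1/((((k:ℝ)+1)/(k:ℝ))^k) := this
          _ = ((k:ℝ)/((k:ℝ)+1))^k := by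
              rw [one_div, ← inv_pow]
              congr 1
              rw [inv_div]
          _ = (rr k)^k := by rw [hx]
    have hsub : Ioc (rr k) 1 ⊆ Ioc (0:ℝ) 1 := Ioc_subset_Ioc_left (hrrk k).1
    have h1 : ∫ s in Ioc (rr k) 1, (rr k)^k * ω s ≤ ∫ s in Ioc (rr k) 1, s^k * ω s := by
      refine setIntegral_mono_on ((hIntsub _ (hrrk k).1).const_mul _)
        ((hMonInt k).mono_set hsub) measurableSet_Ioc ?_
      intro s hs
      exact mul_le_mul_of_nonneg_right
        (pow_le_pow_left₀ (hrrk k).1 hs.1.le k) (hnn s)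
    have h2 : ∫ s in Ioc (rr k) 1, (rr k)^k * ω s = (rr k)^k * What (rr k) := by
      rw [MeasureTheory.integral_const_mul, hWhat]
    have h3 : ∫ s in Ioc (rr k) 1, s^k * ω s ≤ ∫ s in Ioc (0:ℝ) 1, s^k * ω s := by
      refine setIntegral_mono_set (hMonInt k) ?_ (HasSubset.Subset.eventuallyLE hsub)
      refine (ae_restrict_iff' measurableSet_Ioc).mpr
        (Filter.Eventually.of_forall (fun s hs => ?_))
      exact mul_nonneg (pow_nonneg hs.1.le k) (hnn s)
    rw [hmomk]
    have h4 : What (rr k)/3 ≤ (rr k)^k * What (rr k) := by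
      have := mul_le_mul_of_nonneg_right h13 (hWnn (rr k))
      calc What (rr k)/3 = 1/3 * What (rr k) := by ring
        _ ≤ (rr k)^k * What (rr k) := this
    linarith [h1, h2.symm.le, h3]
  -- upper bound for moments
  set φ : ℕ → ℝ := fun i => C^(i+1) * Real.exp (-(2^i : ℝ)/2) with hφ_def
  have hφs : Summable φ := phi_summable hC0.le
  have hφnn : ∀ i, 0 ≤ φ i := fun i =>
    mul_nonneg (pow_nonneg hC0.le _) (Real.exp_pos _).le
  have htsnn : 0 ≤ ∑' i, φ i := tsum_nonneg hφnn
  set K : ℝ := (∑' i, φ i) + 1 with hK_def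
  have hK1 : 1 ≤ K := by simp only [hK_def]; linarith
  set tt : ℕ → ℝ := fun j => 1 - (1/2:ℝ)^j with htt_def
  have httk : ∀ j : ℕ, 0 ≤ tt j ∧ tt j < 1 := by
    intro j
    constructor
    · simp only [htt_def, sub_nonneg]
      exact pow_le_one₀ (by norm_num) (by norm_num)
    · simp only [htt_def, sub_lt_self_iff]
      positivity
  have htt_succ : ∀ j : ℕ, (1 + tt j)/2 = tt (j+1) := by
    intro j
    simp only [htt_def, pow_succ]
    ring
  have httmono : ∀ j : ℕ, tt j ≤ tt (j+1) := by
    intro j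
    simp only [htt_def, sub_le_sub_iff_left, pow_succ]
    nlinarith [pow_pos (by norm_num : (0:ℝ) < 1/2) j]
  have hchain : ∀ j d : ℕ, What (tt j) ≤ C^d * What (tt (j+d)) := by
    intro j d
    induction d with
    | zero => simp
    | succ n ih =>
      refine le_trans ih ?_
      have h1 : What (tt (j+n)) ≤ C * What (tt (j+n+1)) := by
        have := hC (tt (j+n)) ⟨(httk (j+n)).1, (httk (j+n)).2⟩
        rwa [htt_succ (j+n)] at this
      calc C^n * What (tt (j+n)) ≤ C^n * (C * What (tt (j+n+1))) :=
            mul_le_mul_of_nonneg_left h1 (pow_nonneg hC0.le n)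
        _ = C^(n+1) * What (tt (j+(n+1))) := by ring
  have hpartial : ∀ (k m : ℕ), ∫ s in Ioc (0:ℝ) (tt m), s^k * ω s ≤
      ∑ j ∈ Finset.range m, (tt (j+1))^k * What (tt j) := by
    intro k m
    induction m with
    | zero =>
      simp only [htt_def, pow_zero, sub_self, Finset.range_zero, Finset.sum_empty]
      rw [Set.Ioc_self, Measure.restrict_empty, integral_zero_measure]
    | succ n ih =>
      have hsplit : Ioc (0:ℝ) (tt (n+1)) = Ioc (0:ℝ) (tt n) ∪ Ioc (tt n) (tt (n+1)) :=
        (Ioc_union_Ioc_eq_Ioc (httk n).1 (httmono n)).symm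
      have hint1 : IntegrableOn (fun s : ℝ => s^k * ω s) (Ioc (0:ℝ) (tt n)) :=
        (hMonInt k).mono_set (Ioc_subset_Ioc_right (httk n).2.le)
      have hint2 : IntegrableOn (fun s : ℝ => s^k * ω s) (Ioc (tt n) (tt (n+1))) :=
        (hMonInt k).mono_set
          (Ioc_subset_Ioc (httk n).1 (httk (n+1)).2.le)
      rw [hsplit, setIntegral_union (Set.Ioc_disjoint_Ioc_of_le le_rfl) measurableSet_Ioc hint1 hint2,
        Finset.sum_range_succ]
      refine add_le_add ih ?_
      -- piece bound
      have hb1 : ∫ s in Ioc (tt n) (tt (n+1)), s^k * ω s ≤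
          ∫ s in Ioc (tt n) (tt (n+1)), (tt (n+1))^k * ω s := by
        refine setIntegral_mono_on hint2
          (((hIntsub _ (httk n).1).mono_set
            (Ioc_subset_Ioc_right (httk (n+1)).2.le)).const_mul _)
          measurableSet_Ioc ?_
        intro s hs
        have h0s : 0 ≤ s := le_trans (httk n).1 hs.1.le
        exact mul_le_mul_of_nonneg_right (pow_le_pow_left₀ h0s hs.2 k) (hnn s)
      have hb2 : ∫ s in Ioc (tt n) (tt (n+1)), (tt (n+1))^k * ω s ≤
          (tt (n+1))^k * What (tt n) := by
        rw [MeasureTheory.integral_const_mul]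
        refine mul_le_mul_of_nonneg_left ?_ (pow_nonneg (httk (n+1)).1 k)
        rw [hWhat]
        refine setIntegral_mono_set (hIntsub _ (httk n).1)
          (Filter.Eventually.of_forall hnn)
          (HasSubset.Subset.eventuallyLE (Ioc_subset_Ioc_right (httk (n+1)).2.le))
      linarith
  have hmup : ∀ k : ℕ, mom (k:ℝ) ≤ K * What (rr k) := by
    intro k
    set m : ℕ := Nat.clog 2 (k+1) with hm_def
    have hkm : (k:ℕ)+1 ≤ 2^m := Nat.le_pow_clog one_lt_two _
    have h_rk_tm : rr k ≤ tt m := by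
      simp only [hrr_def, htt_def, sub_le_sub_iff_left]
      have h1 : ((1:ℝ)/2)^m = 1/(2^m : ℝ) := by
        rw [div_pow, one_pow]
      rw [h1]
      apply one_div_le_one_div_of_le (by positivity)
      have := (Nat.cast_le (α := ℝ)).mpr hkm
      push_cast at this ⊢
      linarith
    have hsplit : Ioc (0:ℝ) 1 = Ioc (0:ℝ) (tt m) ∪ Ioc (tt m) 1 :=
      (Ioc_union_Ioc_eq_Ioc (httk m).1 (httk m).2.le).symm
    have hint1 : IntegrableOn (fun s : ℝ => s^k * ω s) (Ioc (0:ℝ) (tt m)) :=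
      (hMonInt k).mono_set (Ioc_subset_Ioc_right (httk m).2.le)
    have hint2 : IntegrableOn (fun s : ℝ => s^k * ω s) (Ioc (tt m) 1) :=
      (hMonInt k).mono_set (Ioc_subset_Ioc_left (httk m).1)
    have hsum : mom (k:ℝ) = (∫ s in Ioc (0:ℝ) (tt m), s^k * ω s) +
        ∫ s in Ioc (tt m) 1, s^k * ω s := by
      rw [hmomk, hsplit, setIntegral_union (Set.Ioc_disjoint_Ioc_of_le le_rfl) measurableSet_Ioc
        hint1 hint2]
    -- tail bound
    have htail : ∫ s in Ioc (tt m) 1, s^k * ω s ≤ What (rr k) := by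
      have h1 : ∫ s in Ioc (tt m) 1, s^k * ω s ≤ ∫ s in Ioc (tt m) 1, ω s := by
        refine setIntegral_mono_on hint2 (hIntsub _ (httk m).1) measurableSet_Ioc ?_
        intro s hs
        have h0s : 0 ≤ s := le_trans (httk m).1 hs.1.le
        have : s^k ≤ 1 := pow_le_one₀ h0s hs.2
        nlinarith [hnn s]
      have h2 : (∫ s in Ioc (tt m) 1, ω s) = What (tt m) := (hWhat _).symm
      have h3 : What (tt m) ≤ What (rr k) := hAnti _ _ (hrrk k).1 h_rk_tm
      linarith
    -- head bound
    have hhead : ∑ j ∈ Finset.range m, (tt (j+1))^k * What (tt j) ≤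
        (∑' i, φ i) * What (rr k) := by
      have hterm : ∀ j ∈ Finset.range m, (tt (j+1))^k * What (tt j) ≤
          φ (m-1-j) * What (rr k) := by
        intro j hj
        rw [Finset.mem_range] at hj
        have hk1 : 1 ≤ k := by
          by_contra hk
          have : k = 0 := by omega
          subst this
          simp [hm_def, Nat.clog_one_right] at hj
        have h2m : 2^(m-1) ≤ k := by
          have h := Nat.pow_pred_clog_lt_self one_lt_two (x := k+1) (by omega)
          rw [Nat.pred_eq_sub_one, ← hm_def] at h
          omega
        set i : ℕ := m - 1 - j with hi_def
        have him : i + j + 1 = m := by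
          have hm1 : 1 ≤ m := by omega
          omega
        -- exp bound on (tt (j+1))^k
        have hexp : (tt (j+1))^k ≤ Real.exp (-(2^i : ℝ)/2) := by
          have hx : tt (j+1) ≤ Real.exp (-((1/2:ℝ)^(j+1))) := by
            have := Real.add_one_le_exp (-((1/2:ℝ)^(j+1)))
            simp only [htt_def]
            linarith
          have h1 : (tt (j+1))^k ≤ (Real.exp (-((1/2:ℝ)^(j+1))))^k :=
            pow_le_pow_left₀ (httk (j+1)).1 hx k
          have h2 : (Real.exp (-((1/2:ℝ)^(j+1))))^k =
              Real.exp ((k:ℝ) * (-((1/2:ℝ)^(j+1)))) := (Real.exp_nat_mul _ k).symm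
          rw [h2] at h1
          refine h1.trans (Real.exp_le_exp.mpr ?_)
          -- need k * (1/2)^(j+1) ≥ 2^i/2
          have hcast : ((2:ℝ))^(m-1) ≤ (k:ℝ) := by
            have := (Nat.cast_le (α := ℝ)).mpr h2m
            push_cast at this
            exact this
          have hm1 : m - 1 = i + j := by omega
          rw [hm1] at hcast
          have hhalf : ((1:ℝ)/2)^(j+1) = 1/(2^(j+1) : ℝ) := by
            rw [div_pow, one_pow]
          have hrhs : ((2:ℝ))^(i+j) * ((1/2:ℝ))^(j+1) = (2^i : ℝ)/2 := by
            rw [hhalf, pow_add, pow_succ]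
            field_simp
          have : (2^i : ℝ)/2 ≤ (k:ℝ) * ((1/2:ℝ))^(j+1) := by
            rw [← hrhs]
            exact mul_le_mul_of_nonneg_right hcast (by positivity)
          linarith
        have hWb : What (tt j) ≤ C^(i+1) * What (rr k) := by
          have h1 : What (tt j) ≤ C^(i+1) * What (tt (j+(i+1))) := hchain j (i+1)
          have h2 : j + (i+1) = m := by omega
          rw [h2] at h1
          refine h1.trans (mul_le_mul_of_nonneg_left ?_ (pow_nonneg hC0.le _))
          exact hAnti _ _ (hrrk k).1 h_rk_tm
        calc (tt (j+1))^k * What (tt j) ≤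
            Real.exp (-(2^i : ℝ)/2) * (C^(i+1) * What (rr k)) := by
              refine mul_le_mul hexp hWb (hWnn _) (Real.exp_pos _).le
          _ = φ i * What (rr k) := by simp only [hφ_def]; ring
          _ = φ (m-1-j) * What (rr k) := by rw [hi_def]
      calc ∑ j ∈ Finset.range m, (tt (j+1))^k * What (tt j) ≤
          ∑ j ∈ Finset.range m, φ (m-1-j) * What (rr k) := Finset.sum_le_sum hterm
        _ = (∑ j ∈ Finset.range m, φ (m-1-j)) * What (rr k) := by
            rw [Finset.sum_mul]
        _ = (∑ j ∈ Finset.range m, φ j) * What (rr k) := by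
            rw [Finset.sum_range_reflect]
        _ ≤ (∑' i, φ i) * What (rr k) := by
            refine mul_le_mul_of_nonneg_right ?_ (hWnn _)
            exact hφs.sum_le_tsum _ (fun i _ => hφnn i)
    have := hpartial k m
    rw [hsum, hK_def]
    have hKW : (∑' i, φ i) * What (rr k) + What (rr k) =
        ((∑' i, φ i) + 1) * What (rr k) := by ring
    linarith
  -- measurability of the integrand
  set f : ℝ → ℝ := fun x => (1 - x) ^ p' / What x ^ (p' - 1) with hf_def
  set W : ℝ → ℝ := fun x => ∫ s in Ioc (max x 0) 1, ω s with hW_def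
  have hWanti : Antitone W := by
    intro a b hab
    simp only [hW_def]
    exact setIntegral_mono_set (hIntsub _ (le_max_right a 0))
      (Filter.Eventually.of_forall hnn)
      (HasSubset.Subset.eventuallyLE (Ioc_subset_Ioc_left (max_le_max hab le_rfl)))
  have hWmeas : Measurable W := hWanti.measurable
  have hg : Measurable (fun x : ℝ => (1 - x) ^ p' / W x ^ (p' - 1)) := by
    exact ((measurable_const.sub measurable_id).pow measurable_const).div
      (hWmeas.pow measurable_const)
  have hfm : AEStronglyMeasurable f (volume.restrict (Ioo (0:ℝ) 1)) := by
    refine (hg.aestronglyMeasurable).congr ?_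
    refine Filter.eventuallyEq_of_mem (self_mem_ae_restrict measurableSet_Ioo) ?_
    intro x hx
    have hx0 : max x 0 = x := max_eq_left hx.1.le
    simp only [hf_def, hW_def, hx0]
    rw [hWhat]
  have hfnn : 0 ≤ᵐ[volume.restrict (Ioo (0:ℝ) 1)] f := by
    refine (ae_restrict_iff' measurableSet_Ioo).mpr (Filter.Eventually.of_forall ?_)
    intro x hx
    simp only [hf_def, Pi.zero_apply]
    apply div_nonneg
    · exact Real.rpow_nonneg (by linarith [hx.2]) _
    · exact Real.rpow_nonneg (hpos x ⟨hx.1.le, hx.2⟩).le _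
  have hS1 : ¬ IntegrableOn f (Ioo (0:ℝ) 1) ↔
      ∫⁻ x in Ioo (0:ℝ) 1, ENNReal.ofReal (f x) = ⊤ := by
    have h := (lintegral_ofReal_ne_top_iff_integrable hfm hfnn).not
    rw [not_ne_iff] at h
    exact h.symm
  -- decomposition of the interval
  have hun : Ico (0:ℝ) 1 = ⋃ k, Ico (rr k) (rr (k+1)) := by
    ext x
    constructor
    · rintro ⟨hx0, hx1⟩
      have h1x : 0 < 1 - x := by linarith
      have hu1 : 1 ≤ 1/(1-x) := by
        rw [le_div_iff₀ h1x]; linarith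
      set n : ℕ := ⌊1/(1-x)⌋₊ with hn_def
      have hn1 : 1 ≤ n := Nat.le_floor (by exact_mod_cast hu1)
      have hn0 : (0:ℝ) < n := by exact_mod_cast hn1
      refine mem_iUnion.mpr ⟨n-1, ?_⟩
      have hcast : ((n-1:ℕ):ℝ) + 1 = (n:ℝ) := by
        have : ((n-1:ℕ):ℝ) = (n:ℝ) - 1 := by
          push_cast [Nat.cast_sub hn1]; ring
        rw [this]; ring
      constructor
      · show rr (n-1) ≤ x
        have hfl : (n:ℝ) ≤ 1/(1-x) := Nat.floor_le (by positivity)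
        have h2 : 1 - x ≤ 1/(n:ℝ) := by
          rw [le_div_iff₀ hn0]
          calc (1-x) * n ≤ (1-x) * (1/(1-x)) := by
                exact mul_le_mul_of_nonneg_left hfl h1x.le
            _ = 1 := by field_simp
        simp only [hrr_def, hcast]
        linarith
      · show x < rr (n-1+1)
        have hlt : 1/(1-x) < (n:ℝ)+1 := Nat.lt_floor_add_one _
        have h2 : 1/((n:ℝ)+1) < 1-x := by
          rw [div_lt_iff₀ (by positivity)]
          rw [div_lt_iff₀ h1x] at hlt
          linarith
        simp only [hrr_def]
        push_cast [Nat.cast_sub hn1]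
        have : ((n-1:ℕ):ℝ) + 1 + 1 = (n:ℝ) + 1 := by rw [hcast]
        rw [show ((n:ℝ) - 1 + 1 + 1) = (n:ℝ)+1 by ring]
        linarith
    · intro hx
      obtain ⟨k, hk⟩ := mem_iUnion.mp hx
      exact ⟨le_trans (hrrk k).1 hk.1, lt_of_lt_of_le hk.2 (hrrk (k+1)).2.le⟩
  have hdisj : Pairwise (Function.onFun Disjoint fun k => Ico (rr k) (rr (k+1))) := by
    have main : ∀ i j : ℕ, i < j →
        Disjoint (Ico (rr i) (rr (i+1))) (Ico (rr j) (rr (j+1))) := by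
      intro i j hij
      rw [Set.Ico_disjoint_Ico]
      refine le_trans (min_le_left _ _) (le_trans (hrmono' (i+1) j hij) (le_max_right _ _))
    intro i j hij
    rcases hij.lt_or_gt with h | h
    · exact main i j h
    · exact (main j i h).symm
  have hS2 : ∫⁻ x in Ioo (0:ℝ) 1, ENNReal.ofReal (f x) =
      ∑' k, ∫⁻ x in Ico (rr k) (rr (k+1)), ENNReal.ofReal (f x) := by
    rw [Measure.restrict_congr_set Ioo_ae_eq_Ico, hun,
      lintegral_iUnion (fun k => measurableSet_Ico) hdisj]
  -- the comparison series
  set q : ℕ → ℝ := fun k => 1/(((k:ℝ)+1)^(2+p') * What (rr k)^(p'-1)) with hq_def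
  set dd : ℕ → ℝ := fun k => 1/(((k:ℝ)+1)^(2+p') * mom (k:ℝ)^(p'-1)) with hdd_def
  have hx1p : ∀ k : ℕ, (0:ℝ) < (k:ℝ)+1 := fun k => by positivity
  have hx2p : ∀ k : ℕ, (0:ℝ) < (k:ℝ)+2 := fun k => by positivity
  have hNpos : ∀ k : ℕ, (0:ℝ) < ((k:ℝ)+1)^(2+p') :=
    fun k => Real.rpow_pos_of_pos (hx1p k) _
  have hmompos : ∀ k : ℕ, 0 < mom (k:ℝ) :=
    fun k => lt_of_lt_of_le (div_pos (hWpos k) three_pos) (hmlow k)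
  have ha_eq : ∀ k : ℕ, 1 - rr k = 1/((k:ℝ)+1) := by
    intro k; simp [hrr_def]
  have hb_eq : ∀ k : ℕ, 1 - rr (k+1) = 1/((k:ℝ)+2) := by
    intro k; simp [hrr_def]; push_cast; ring
  have hlen : ∀ k : ℕ, rr (k+1) - rr k = 1/(((k:ℝ)+1)*((k:ℝ)+2)) := by
    intro k
    simp only [hrr_def]
    push_cast
    have h1 : ((k:ℝ)+1) ≠ 0 := by positivity
    have h2 : ((k:ℝ)+1+1) ≠ 0 := by positivity
    field_simp
    ring
  -- pointwise bounds on the dyadic pieces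
  have hWlbC : ∀ k : ℕ, ∀ x ∈ Ico (rr k) (rr (k+1)), What (rr k)/C ≤ What x := by
    intro k x hx
    have hx0 : 0 ≤ x := le_trans (hrrk k).1 hx.1
    rw [div_le_iff₀ hC0, mul_comm]
    calc What (rr k) ≤ C * What (rr (k+1)) := hWd k
      _ ≤ C * What x := mul_le_mul_of_nonneg_left (hAnti x (rr (k+1)) hx0 hx.2.le) hC0.le
  have hS3 : ∀ k : ℕ, (∫⁻ x in Ico (rr k) (rr (k+1)), ENNReal.ofReal (f x)) ≤
      ENNReal.ofReal (C^(p'-1)) * ENNReal.ofReal (q k) := by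
    intro k
    set ub : ℝ := (1/((k:ℝ)+1))^p' / (What (rr k)/C)^(p'-1) with hub_def
    have hub_nn : 0 ≤ ub :=
      div_nonneg (Real.rpow_nonneg (by positivity) _)
        (Real.rpow_nonneg (div_nonneg (hWpos k).le hC0.le) _)
    have hpoint : ∀ x ∈ Ico (rr k) (rr (k+1)), f x ≤ ub := by
      intro x hx
      have hx0 : 0 ≤ x := le_trans (hrrk k).1 hx.1
      have hx1' : x < 1 := lt_trans hx.2 (hrrk (k+1)).2
      have h1x : 1 - x ≤ 1/((k:ℝ)+1) := by
        have h := hx.1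
        simp only [hrr_def] at h
        linarith
      simp only [hf_def, hub_def]
      apply div_le_div₀ (Real.rpow_nonneg (by positivity) _)
        (Real.rpow_le_rpow (by linarith) h1x hp'0.le)
        (Real.rpow_pos_of_pos (div_pos (hWpos k) hC0) _)
        (Real.rpow_le_rpow (div_nonneg (hWpos k).le hC0.le) (hWlbC k x hx) hβ.le)
    have R1 : ub * (rr (k+1) - rr k) ≤ C^(p'-1) * q k := by
      simp only [hq_def]
      rw [hlen k, hub_def]
      have e1 : ((1:ℝ)/((k:ℝ)+1))^p' = 1/((k:ℝ)+1)^p' := by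
        rw [Real.div_rpow zero_le_one (hx1p k).le, Real.one_rpow]
      have e3 : ((k:ℝ)+1)^(2+p') = ((k:ℝ)+1)^2 * ((k:ℝ)+1)^p' := by
        rw [Real.rpow_add (hx1p k), Real.rpow_two]
      have e2 : (What (rr k)/C)^(p'-1) = What (rr k)^(p'-1)/C^(p'-1) :=
        Real.div_rpow (hWpos k).le hC0.le _
      rw [e1, e2, e3]
      have h12 : ((k:ℝ)+1)^2 ≤ ((k:ℝ)+1)*((k:ℝ)+2) := by nlinarith [(hx1p k).le]
      have := aux_R1 (Real.rpow_pos_of_pos (hx1p k) p')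
        (Real.rpow_pos_of_pos (hWpos k) (p'-1)) (Real.rpow_pos_of_pos hC0 (p'-1))
        (hx1p k) (hx2p k) h12
      exact this
    calc (∫⁻ x in Ico (rr k) (rr (k+1)), ENNReal.ofReal (f x))
        ≤ ∫⁻ _ in Ico (rr k) (rr (k+1)), ENNReal.ofReal ub :=
          setLIntegral_mono' measurableSet_Ico
            (fun x hx => ENNReal.ofReal_le_ofReal (hpoint x hx))
      _ = ENNReal.ofReal ub * volume (Ico (rr k) (rr (k+1))) :=
          setLIntegral_const _ _
      _ = ENNReal.ofReal (ub * (rr (k+1) - rr k)) := by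
          rw [Real.volume_Ico, ← ENNReal.ofReal_mul hub_nn]
      _ ≤ ENNReal.ofReal (C^(p'-1) * q k) := ENNReal.ofReal_le_ofReal R1
      _ = ENNReal.ofReal (C^(p'-1)) * ENNReal.ofReal (q k) :=
          ENNReal.ofReal_mul (Real.rpow_nonneg hC0.le _)
  have hS4 : ∀ k : ℕ, ENNReal.ofReal (q k) ≤
      ENNReal.ofReal (2^(p'+1)) * (∫⁻ x in Ico (rr k) (rr (k+1)), ENNReal.ofReal (f x)) := by
    intro k
    set lb : ℝ := (1/((k:ℝ)+2))^p' / What (rr k)^(p'-1) with hlb_def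
    have hlb_nn : 0 ≤ lb :=
      div_nonneg (Real.rpow_nonneg (by positivity) _) (Real.rpow_nonneg (hWpos k).le _)
    have hpoint : ∀ x ∈ Ico (rr k) (rr (k+1)), lb ≤ f x := by
      intro x hx
      have hx0 : 0 ≤ x := le_trans (hrrk k).1 hx.1
      have hx1' : x < 1 := lt_trans hx.2 (hrrk (k+1)).2
      have h2x : 1/((k:ℝ)+2) ≤ 1 - x := by
        have h := hx.2
        simp only [hrr_def] at h
        push_cast at h
        have e : ((k:ℝ)+1+1) = (k:ℝ)+2 := by ring
        rw [e] at h
        linarith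
      have hWxpos : 0 < What x := hpos x ⟨hx0, hx1'⟩
      have hWub : What x ≤ What (rr k) := hAnti (rr k) x (hrrk k).1 hx.1
      simp only [hf_def, hlb_def]
      apply div_le_div₀ (Real.rpow_nonneg (by linarith) _)
        (Real.rpow_le_rpow (by positivity) h2x hp'0.le)
        (Real.rpow_pos_of_pos hWxpos _)
        (Real.rpow_le_rpow hWxpos.le hWub hβ.le)
    have R2 : q k ≤ 2^(p'+1) * (lb * (rr (k+1) - rr k)) := by
      simp only [hq_def]
      rw [hlen k, hlb_def]
      have e1 : ((1:ℝ)/((k:ℝ)+2))^p' = 1/((k:ℝ)+2)^p' := by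
        rw [Real.div_rpow zero_le_one (hx2p k).le, Real.one_rpow]
      have e3 : ((k:ℝ)+1)^(2+p') = ((k:ℝ)+1)^2 * ((k:ℝ)+1)^p' := by
        rw [Real.rpow_add (hx1p k), Real.rpow_two]
      have e4 : (2:ℝ)^(p'+1) = 2^p' * 2 := by
        rw [Real.rpow_add two_pos, Real.rpow_one]
      have hPT : ((k:ℝ)+2)^p' ≤ 2^p' * ((k:ℝ)+1)^p' := by
        rw [← Real.mul_rpow (by norm_num) (hx1p k).le]
        apply Real.rpow_le_rpow (hx2p k).le (by linarith [(hx1p k).le]) hp'0.le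
      rw [e1, e3, e4]
      have := aux_R2 (Real.rpow_pos_of_pos (hx1p k) p') (Real.rpow_pos_of_pos (hx2p k) p')
        (Real.rpow_pos_of_pos (hWpos k) (p'-1)) (Real.rpow_pos_of_pos two_pos p')
        (hx1p k) (hx2p k) hPT (by linarith [(hx1p k).le])
      exact this
    calc ENNReal.ofReal (q k)
        ≤ ENNReal.ofReal (2^(p'+1) * (lb * (rr (k+1) - rr k))) :=
          ENNReal.ofReal_le_ofReal R2
      _ = ENNReal.ofReal (2^(p'+1)) * ENNReal.ofReal (lb * (rr (k+1) - rr k)) :=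
          ENNReal.ofReal_mul (Real.rpow_nonneg (by norm_num) _)
      _ ≤ ENNReal.ofReal (2^(p'+1)) * (∫⁻ x in Ico (rr k) (rr (k+1)), ENNReal.ofReal (f x)) := by
          apply mul_le_mul_right
          have : ENNReal.ofReal (lb * (rr (k+1) - rr k)) =
              ∫⁻ _ in Ico (rr k) (rr (k+1)), ENNReal.ofReal lb := by
            rw [setLIntegral_const, Real.volume_Ico, ← ENNReal.ofReal_mul hlb_nn]
          rw [this]
          exact setLIntegral_mono' measurableSet_Ico
            (fun x hx => ENNReal.ofReal_le_ofReal (hpoint x hx))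
  -- comparison between q and dd
  have hS5 : ∀ k : ℕ, ENNReal.ofReal (q k) ≤
      ENNReal.ofReal (K^(p'-1)) * ENNReal.ofReal (dd k) := by
    intro k
    rw [← ENNReal.ofReal_mul (Real.rpow_nonneg (by linarith) _)]
    apply ENNReal.ofReal_le_ofReal
    simp only [hq_def, hdd_def]
    apply aux_R3 (hNpos k) (Real.rpow_pos_of_pos (hWpos k) _)
      (Real.rpow_pos_of_pos (hmompos k) _)
    rw [← Real.mul_rpow (by linarith) (hWpos k).le]
    exact Real.rpow_le_rpow (hmompos k).le (hmup k) hβ.le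
  have hS6 : ∀ k : ℕ, ENNReal.ofReal (dd k) ≤
      ENNReal.ofReal ((3:ℝ)^(p'-1)) * ENNReal.ofReal (q k) := by
    intro k
    rw [← ENNReal.ofReal_mul (Real.rpow_nonneg (by norm_num) _)]
    apply ENNReal.ofReal_le_ofReal
    simp only [hq_def, hdd_def]
    apply aux_R3 (hNpos k) (Real.rpow_pos_of_pos (hmompos k) _)
      (Real.rpow_pos_of_pos (hWpos k) _)
    rw [← Real.mul_rpow (by norm_num) (hmompos k).le]
    apply Real.rpow_le_rpow (hWpos k).le _ hβ.le
    linarith [hmlow k]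
  -- final assembly
  have hddnn : ∀ k : ℕ, 0 ≤ dd k := by
    intro k
    simp only [hdd_def]
    exact div_nonneg zero_le_one
      (mul_nonneg (hNpos k).le (Real.rpow_nonneg (hmompos k).le _))
  have hS7 : (¬ Summable dd) ↔ ∑' k, ENNReal.ofReal (dd k) = ⊤ :=
    not_summable_iff_ofReal hddnn
  rw [hS1, hS2, hS7]
  constructor
  · intro h
    refine tsum_top_mono ENNReal.ofReal_ne_top hS5 ?_
    exact tsum_top_mono ENNReal.ofReal_ne_top hS3 h
  · intro h
    refine tsum_top_mono ENNReal.ofReal_ne_top hS4 ?_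
    exact tsum_top_mono ENNReal.ofReal_ne_top hS6 h
end
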